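/- arXiv:1611.04701 — 10 statements merged into one kernel-verified Lean document; each statement's English description precedes it below -/
import Mathlib

section
/- Let $A$ be a $q \times p$ real matrix and $\Gamma = A^T A$. Suppose $\Gamma$ satisfies the Lower-RE condition with curvature $\alpha > 0$ and tolerance $\tau > 0$, i.e., $\theta^T \Gamma \theta \ge \alpha \|\theta\|_2^2 - \tau \|\theta\|_1^2$ for all $\theta \in \mathbb{R}^p$. If $\tau (1+k_0)^2 s_0 \le \alpha/2$, then $A$ satisfies the restricted eigenvalue condition $RE(s_0, k_0, A)$ with $1/K(s_0,k_0,A) \ge \sqrt{\alpha/2} > 0$; that is, for every subset $J \subseteq \{1,\dots,p\}$ with $|J| \le s_0$ and every nonzero $v$ with $\|v_{J^c}\|_1 \le k_0 \|v_J\|_1$, we have $\|Av\|_2 \ge \sqrt{\alpha/2}\, \|v_J\|_2$. -/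
open Finset Matrix

/-- Lower-RE condition with curvature α and tolerance τ implies the
restricted eigenvalue condition RE(s₀, k₀, A) with constant √(α/2),
provided τ (1+k₀)² s₀ ≤ α/2. -/
theorem lowerRE_implies_RE {q p : ℕ} (A : Matrix (Fin q) (Fin p) ℝ)
    (α τ : ℝ) (hα : 0 < α) (hτ : 0 < τ) (s₀ : ℕ) (k₀ : ℝ) (hk₀ : 0 < k₀)
    (hLRE : ∀ θ : Fin p → ℝ,
      θ ⬝ᵥ (Aᵀ * A).mulVec θ ≥ α * (∑ i, θ i ^ 2) - τ * (∑ i, |θ i|) ^ 2)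
    (hcond : τ * (1 + k₀) ^ 2 * s₀ ≤ α / 2) :
    ∀ J : Finset (Fin p), J.card ≤ s₀ → ∀ v : Fin p → ℝ, v ≠ 0 →
      (∑ i ∈ Jᶜ, |v i|) ≤ k₀ * (∑ i ∈ J, |v i|) →
      Real.sqrt (α / 2) * Real.sqrt (∑ i ∈ J, v i ^ 2) ≤
        Real.sqrt (∑ j, (A.mulVec v j) ^ 2) := by
  intro J hJ v hv hcone
  set SJ := ∑ i ∈ J, v i ^ 2 with hSJ
  set L := ∑ i ∈ J, |v i| with hL
  have hSJnn : 0 ≤ SJ := Finset.sum_nonneg fun i _ => sq_nonneg _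
  have hLnn : 0 ≤ L := Finset.sum_nonneg fun i _ => abs_nonneg _
  -- quadratic form equals squared norm of A v
  have hQ : v ⬝ᵥ (Aᵀ * A).mulVec v = ∑ j, (A.mulVec v j) ^ 2 := by
    rw [← Matrix.mulVec_mulVec, Matrix.dotProduct_mulVec, Matrix.vecMul_transpose]
    simp [dotProduct, sq]
  -- ℓ1 norm bound
  have hsplit : (∑ i, |v i|) = L + ∑ i ∈ Jᶜ, |v i| := by
    rw [hL, Finset.sum_add_sum_compl]
  have h1 : (∑ i, |v i|) ≤ (1 + k₀) * L := by
    rw [hsplit]; nlinarith [hcone]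
  have h1sq : (∑ i, |v i|) ^ 2 ≤ (1 + k₀) ^ 2 * L ^ 2 := by
    have h0 : 0 ≤ ∑ i, |v i| := Finset.sum_nonneg fun i _ => abs_nonneg _
    nlinarith
  -- Cauchy–Schwarz on J
  have hCS : L ^ 2 ≤ (J.card : ℝ) * SJ := by
    have := sq_sum_le_card_mul_sum_sq (s := J) (f := fun i => |v i|)
    simpa [sq_abs] using this
  have hcard : (J.card : ℝ) ≤ (s₀ : ℝ) := by exact_mod_cast hJ
  have hsum : SJ ≤ ∑ i, v i ^ 2 := by
    apply Finset.sum_le_sum_of_subset_of_nonneg (Finset.subset_univ J)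
    intro i _ _; exact sq_nonneg _
  have hmain : α / 2 * SJ ≤ ∑ j, (A.mulVec v j) ^ 2 := by
    have hlre := hLRE v
    rw [hQ] at hlre
    have hτL : τ * (∑ i, |v i|) ^ 2 ≤ α / 2 * SJ := by
      have t1 : τ * (∑ i, |v i|) ^ 2 ≤ τ * ((1 + k₀) ^ 2 * L ^ 2) :=
        mul_le_mul_of_nonneg_left h1sq hτ.le
      have t2 : τ * ((1 + k₀) ^ 2 * L ^ 2) ≤ τ * ((1 + k₀) ^ 2 * ((s₀ : ℝ) * SJ)) := by
        have : L ^ 2 ≤ (s₀ : ℝ) * SJ :=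
          hCS.trans (mul_le_mul_of_nonneg_right hcard hSJnn)
        have hpos : (0:ℝ) ≤ τ * (1 + k₀) ^ 2 := by positivity
        have := mul_le_mul_of_nonneg_left this hpos
        nlinarith
      have t3 : τ * ((1 + k₀) ^ 2 * ((s₀ : ℝ) * SJ)) ≤ α / 2 * SJ := by
        nlinarith
      linarith
    nlinarith [mul_le_mul_of_nonneg_left hsum hα.le]
  calc Real.sqrt (α / 2) * Real.sqrt SJ = Real.sqrt (α / 2 * SJ) :=
        (Real.sqrt_mul (by positivity) _).symm
    _ ≤ Real.sqrt (∑ j, (A.mulVec v j) ^ 2) := Real.sqrt_le_sqrt hmain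
end

section
/- Let $A$ be a $q \times p$ matrix, $k_0 > 0$, and $s_0 = (k_0+1)^2$. Suppose the restricted eigenvalue condition $RE(s_0, k_0, A)$ holds with constant $K = K(s_0,k_0,A)$, i.e., for every $|J| \le s_0$ and every $v \ne 0$ with $\|v_{J^c}\|_1 \le k_0\|v_J\|_1$ one has $\|Av\|_2 \ge \|v_J\|_2 / K$. Set $\alpha = 1/((k_0+1) K^2)$ and let $\tau > 0$ satisfy $\lambda_{\min}(A^T A) \ge \alpha - \tau s_0/4$. Then $\Gamma = A^T A$ satisfies the Lower-RE condition: $\theta^T \Gamma \theta \ge \alpha \|\theta\|_2^2 - \tau \|\theta\|_1^2$ for all $\theta \in \mathbb{R}^p$. -/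
open Finset Matrix

set_option maxHeartbeats 1000000

/-- RE(s₀, k₀, A) with s₀ = (k₀+1)², together with a lower bound
λ_min(AᵀA) ≥ α - τ s₀/4 where α = 1/((k₀+1) K²), implies the Lower-RE
condition for Γ = AᵀA with curvature α and tolerance τ. -/
theorem RE_implies_lowerRE {q p : ℕ} (A : Matrix (Fin q) (Fin p) ℝ)
    (k₀ K τ : ℝ) (hk₀ : 0 < k₀) (hK : 0 < K) (hτ : 0 < τ)
    (hRE : ∀ J : Finset (Fin p), (J.card : ℝ) ≤ (k₀ + 1) ^ 2 →
      ∀ v : Fin p → ℝ, v ≠ 0 → (∑ i ∈ Jᶜ, |v i|) ≤ k₀ * (∑ i ∈ J, |v i|) →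
        Real.sqrt (∑ i ∈ J, v i ^ 2) / K ≤ Real.sqrt (∑ j, (A.mulVec v j) ^ 2))
    (hlmin : ∀ θ : Fin p → ℝ,
      (1 / ((k₀ + 1) * K ^ 2) - τ * ((k₀ + 1) ^ 2) / 4) * (∑ i, θ i ^ 2) ≤
        θ ⬝ᵥ (Aᵀ * A).mulVec θ) :
    ∀ θ : Fin p → ℝ,
      θ ⬝ᵥ (Aᵀ * A).mulVec θ ≥
        (1 / ((k₀ + 1) * K ^ 2)) * (∑ i, θ i ^ 2) - τ * (∑ i, |θ i|) ^ 2 := by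
  intro θ
  set t2 := ∑ i, θ i ^ 2 with ht2
  set L := ∑ i, |θ i| with hLdef
  have ht2nn : 0 ≤ t2 := Finset.sum_nonneg fun i _ => sq_nonneg _
  have hLnn : 0 ≤ L := Finset.sum_nonneg fun i _ => abs_nonneg _
  have hk1 : (0:ℝ) < k₀ + 1 := by linarith
  by_cases hcase : (k₀ + 1) ^ 2 * t2 ≤ 4 * L ^ 2
  · have h := hlmin θ
    rw [← ht2] at h
    have h2 : τ * ((k₀ + 1) ^ 2 * t2) ≤ τ * (4 * L ^ 2) :=
      mul_le_mul_of_nonneg_left hcase hτ.le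
    nlinarith
  push_neg at hcase
  -- hcase : 4 * L ^ 2 < (k₀ + 1) ^ 2 * t2
  have hL2 : t2 ≤ L ^ 2 := by
    rw [ht2, hLdef]
    calc ∑ i, θ i ^ 2 = ∑ i, |θ i| ^ 2 := by simp [sq_abs]
    _ ≤ (∑ i, |θ i|) ^ 2 :=
        Finset.sum_sq_le_sq_sum_of_nonneg fun i _ => abs_nonneg _
  have ht2pos : 0 < t2 := by nlinarith
  have hk2 : (2:ℝ) < k₀ + 1 := by
    by_contra h
    push_neg at h
    have h4 : (k₀ + 1) ^ 2 ≤ 4 := by nlinarith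
    have := mul_le_mul_of_nonneg_right h4 ht2nn
    nlinarith
  set t := Real.sqrt t2 with htdef
  have htsq : t ^ 2 = t2 := Real.sq_sqrt ht2nn
  have htpos : 0 < t := Real.sqrt_pos.mpr ht2pos
  set J : Finset (Fin p) := Finset.univ.filter (fun i => t < (k₀ + 1) * |θ i|) with hJ
  set SJ := ∑ i ∈ J, θ i ^ 2 with hSJdef
  have hSJnn : 0 ≤ SJ := Finset.sum_nonneg fun i _ => sq_nonneg _
  have hSJle : SJ ≤ t2 := by
    rw [hSJdef, ht2]
    exact Finset.sum_le_sum_of_subset_of_nonneg (Finset.subset_univ J)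
      (fun i _ _ => sq_nonneg _)
  -- cardinality bound
  have hcard : (J.card : ℝ) ≤ (k₀ + 1) ^ 2 := by
    have h1 : ∀ i ∈ J, t ^ 2 ≤ (k₀ + 1) ^ 2 * θ i ^ 2 := by
      intro i hi
      rw [hJ, Finset.mem_filter] at hi
      have h' := pow_le_pow_left₀ htpos.le hi.2.le 2
      rw [mul_pow, sq_abs] at h'
      linarith
    have h2 : (J.card : ℝ) * t ^ 2 ≤ (k₀ + 1) ^ 2 * SJ := by
      have := Finset.card_nsmul_le_sum J (fun i => (k₀ + 1) ^ 2 * θ i ^ 2) (t ^ 2) h1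
      rw [nsmul_eq_mul] at this
      rw [hSJdef, Finset.mul_sum]
      linarith
    have h3 : (k₀ + 1) ^ 2 * SJ ≤ (k₀ + 1) ^ 2 * t2 :=
      mul_le_mul_of_nonneg_left hSJle (by positivity)
    rw [htsq] at h2
    have := le_of_mul_le_mul_right (by linarith : (J.card : ℝ) * t2 ≤ (k₀ + 1) ^ 2 * t2) ht2pos
    exact this
  -- 2L ≤ (k₀+1) t
  have h2L : 2 * L ≤ (k₀ + 1) * t := by
    by_contra h
    push_neg at h
    have h' := pow_lt_pow_left₀ h (mul_nonneg hk1.le htpos.le) two_ne_zero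
    rw [mul_pow, mul_pow, htsq] at h'
    nlinarith
  -- tail bound
  have htail : ∑ i ∈ Jᶜ, θ i ^ 2 ≤ t ^ 2 / 2 := by
    have h1 : ∀ i ∈ Jᶜ, (k₀ + 1) * θ i ^ 2 ≤ t * |θ i| := by
      intro i hi
      rw [Finset.mem_compl, hJ, Finset.mem_filter] at hi
      have h' : (k₀ + 1) * |θ i| ≤ t := by
        by_contra h''
        exact hi ⟨Finset.mem_univ i, by push_neg at h''; exact h''⟩
      nlinarith [abs_nonneg (θ i), sq_abs (θ i)]
    have h2 : (k₀ + 1) * ∑ i ∈ Jᶜ, θ i ^ 2 ≤ t * ∑ i ∈ Jᶜ, |θ i| := by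
      rw [Finset.mul_sum, Finset.mul_sum]
      exact Finset.sum_le_sum h1
    have h3 : ∑ i ∈ Jᶜ, |θ i| ≤ L := by
      rw [hLdef]
      exact Finset.sum_le_sum_of_subset_of_nonneg (Finset.subset_univ _)
        (fun i _ _ => abs_nonneg _)
    have h4 : t * ∑ i ∈ Jᶜ, |θ i| ≤ t * L := mul_le_mul_of_nonneg_left h3 htpos.le
    have h5 : (k₀ + 1) * ∑ i ∈ Jᶜ, θ i ^ 2 ≤ t * L := le_trans h2 h4
    have h6 : 2 * (t * L) ≤ (k₀ + 1) * t ^ 2 := by nlinarith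
    have h7 : 0 ≤ ∑ i ∈ Jᶜ, θ i ^ 2 := Finset.sum_nonneg fun i _ => sq_nonneg _
    nlinarith
  have hsplit : SJ + ∑ i ∈ Jᶜ, θ i ^ 2 = t2 := by
    rw [hSJdef, ht2]; exact Finset.sum_add_sum_compl J _
  have hSJhalf : t ^ 2 / 2 ≤ SJ := by rw [htsq]; linarith
  -- cone condition
  have hJ1 : Real.sqrt SJ ≤ ∑ i ∈ J, |θ i| := by
    have : SJ ≤ (∑ i ∈ J, |θ i|) ^ 2 := by
      rw [hSJdef]
      calc ∑ i ∈ J, θ i ^ 2 = ∑ i ∈ J, |θ i| ^ 2 := by simp [sq_abs]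
      _ ≤ (∑ i ∈ J, |θ i|) ^ 2 :=
          Finset.sum_sq_le_sq_sum_of_nonneg fun i _ => abs_nonneg _
    calc Real.sqrt SJ ≤ Real.sqrt ((∑ i ∈ J, |θ i|) ^ 2) := Real.sqrt_le_sqrt this
    _ = ∑ i ∈ J, |θ i| := Real.sqrt_sq (Finset.sum_nonneg fun i _ => abs_nonneg _)
  have hJhalf : t / 2 ≤ ∑ i ∈ J, |θ i| := by
    have h1 : Real.sqrt (t ^ 2 / 2) ≤ Real.sqrt SJ := Real.sqrt_le_sqrt hSJhalf
    have h2 : t / 2 ≤ Real.sqrt (t ^ 2 / 2) := by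
      rw [show (t:ℝ) / 2 = Real.sqrt ((t / 2) ^ 2) from (Real.sqrt_sq (by positivity)).symm]
      exact Real.sqrt_le_sqrt (by nlinarith)
    linarith
  have hcone : (∑ i ∈ Jᶜ, |θ i|) ≤ k₀ * (∑ i ∈ J, |θ i|) := by
    have hLsplit : (∑ i ∈ J, |θ i|) + ∑ i ∈ Jᶜ, |θ i| = L := by
      rw [hLdef]; exact Finset.sum_add_sum_compl J _
    nlinarith
  have hne : θ ≠ 0 := by
    intro h
    rw [ht2, h] at ht2pos
    simp at ht2pos
  have hre := hRE J hcard θ hne hcone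
  rw [← hSJdef] at hre
  -- Γ identity
  have hΓ : θ ⬝ᵥ (Aᵀ * A).mulVec θ = ∑ j, (A.mulVec θ j) ^ 2 := by
    rw [← Matrix.mulVec_mulVec, Matrix.dotProduct_mulVec, Matrix.vecMul_transpose]
    simp [dotProduct, sq]
  set Q := ∑ j, (A.mulVec θ j) ^ 2 with hQdef
  have hQnn : 0 ≤ Q := Finset.sum_nonneg fun j _ => sq_nonneg _
  have hQge : SJ / K ^ 2 ≤ Q := by
    have h1 : (Real.sqrt SJ / K) ^ 2 ≤ (Real.sqrt Q) ^ 2 :=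
      pow_le_pow_left₀ (by positivity) hre 2
    rw [div_pow, Real.sq_sqrt hSJnn, Real.sq_sqrt hQnn] at h1
    exact h1
  rw [hΓ]
  have hK2 : (0:ℝ) < K ^ 2 := by positivity
  have hα : 1 / ((k₀ + 1) * K ^ 2) * t2 ≤ SJ / K ^ 2 := by
    rw [show (1:ℝ) / ((k₀ + 1) * K ^ 2) * t2 = t2 / ((k₀ + 1) * K ^ 2) by ring,
      div_le_div_iff₀ (by positivity) hK2]
    nlinarith [mul_le_mul_of_nonneg_right hSJhalf hK2.le, htsq,
      mul_nonneg hSJnn hK2.le]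
  linarith [mul_nonneg hτ.le (sq_nonneg L), hα, hQge]
end

section
/- For every $1 \le s \le m$ and every index set $I \subseteq \{1,\dots,m\}$ with $|I| \le s$, the set $\sqrt{|I|}\, B_1^m \cap S^{m-1}$ is contained in $2\,\mathrm{conv}(U_s \cap S^{m-1})$, where $U_s = \{x \in \mathbb{R}^m : |\mathrm{supp}(x)| \le s\}$. -/
open Finset Pointwise

private def Blk (m s k : ℕ) : Finset (Fin m) :=
  univ.filter (fun i => k * s ≤ i.val ∧ i.val < (k + 1) * s)

private lemma mem_Blk {m s : ℕ} (hs : 1 ≤ s) {k : ℕ} {i : Fin m} :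
    i ∈ Blk m s k ↔ i.val / s = k := by
  simp only [Blk, mem_filter, mem_univ, true_and]
  constructor
  · rintro ⟨h1, h2⟩; exact Nat.div_eq_of_lt_le h1 h2
  · rintro rfl
    have hq := Nat.div_add_mod' i.val s
    have hr : i.val % s < s := Nat.mod_lt _ hs
    refine ⟨Nat.div_mul_le_self _ _, ?_⟩
    calc i.val = i.val / s * s + i.val % s := hq.symm
      _ < i.val / s * s + s := Nat.add_lt_add_left hr _
      _ = (i.val / s + 1) * s := by ring

private lemma sum_Blk {m s : ℕ} (hs : 1 ≤ s) (f : Fin m → ℝ) :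
    ∑ k ∈ Finset.range (m / s + 1), ∑ i ∈ Blk m s k, f i = ∑ i, f i := by
  have hB : ∀ k, Blk m s k = univ.filter (fun i : Fin m => i.val / s = k) := by
    intro k; ext i; simp [mem_Blk hs]
  simp_rw [hB]
  exact sum_fiberwise_of_maps_to
    (fun i _ => mem_range.2 (Nat.lt_succ_of_le (Nat.div_le_div_right i.isLt.le))) f

private lemma card_Blk_le {m s k : ℕ} : (Blk m s k).card ≤ s := by
  have h : (Blk m s k).card ≤ (Finset.Ico (k * s) ((k + 1) * s)).card := by
    apply Finset.card_le_card_of_injOn (fun i : Fin m => i.val)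
    · intro i hi
      simp only [Finset.mem_coe, Blk, mem_filter, mem_univ, true_and] at hi
      exact Finset.mem_Ico.2 ⟨hi.1, hi.2⟩
    · exact fun i _ j _ hij => Fin.ext hij
  rw [Nat.card_Ico] at h
  calc (Blk m s k).card ≤ (k + 1) * s - k * s := h
    _ = s := by rw [add_mul, one_mul, Nat.add_sub_cancel_left]

private lemma card_Blk_eq {m s k : ℕ} (h : (k + 1) * s ≤ m) : (Blk m s k).card = s := by
  have hBlk : Blk m s k = Finset.attachFin (Finset.Ico (k * s) ((k + 1) * s))
      (fun n hn => lt_of_lt_of_le (Finset.mem_Ico.1 hn).2 h) := by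
    ext i
    simp [Blk, Finset.mem_attachFin, Finset.mem_Ico]
  rw [hBlk, Finset.card_attachFin, Nat.card_Ico, add_mul, one_mul, Nat.add_sub_cancel_left]

private lemma sparse_aux {m : ℕ} (s : ℕ) (hs : 1 ≤ s) (hsm : s ≤ m) (y : Fin m → ℝ)
    (h1 : ∑ i, |y i| ≤ Real.sqrt s) (h2 : ∑ i, y i ^ 2 = 1)
    (hmono : ∀ i j : Fin m, i ≤ j → |y j| ≤ |y i|) :
    y ∈ (2 : ℝ) • convexHull ℝ
        ({x : Fin m → ℝ | (∃ T : Finset (Fin m), T.card ≤ s ∧ ∀ i ∉ T, x i = 0)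
          ∧ (∑ i, x i ^ 2) = 1}) := by
  have hm : 0 < m := hs.trans hsm
  set A : Set (Fin m → ℝ) := {x | (∃ T : Finset (Fin m), T.card ≤ s ∧ ∀ i ∉ T, x i = 0)
      ∧ (∑ i, x i ^ 2) = 1} with hA
  set K := m / s + 1 with hK
  set a : ℕ → ℝ := fun k => ∑ i ∈ Blk m s k, |y i| with ha
  set b : ℕ → ℝ := fun k => ∑ i ∈ Blk m s k, y i ^ 2 with hb
  have ha0 : ∀ k, 0 ≤ a k := fun k => sum_nonneg fun i _ => abs_nonneg _
  have hb0 : ∀ k, 0 ≤ b k := fun k => sum_nonneg fun i _ => sq_nonneg _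
  set lam : ℕ → ℝ := fun k => Real.sqrt (b k) with hlam
  have hlam0 : ∀ k, 0 ≤ lam k := fun k => Real.sqrt_nonneg _
  set g : ℕ → (Fin m → ℝ) := fun k i => if i ∈ Blk m s k then y i else 0 with hg
  set i0 : Fin m := ⟨0, hm⟩ with hi0
  set e0 : Fin m → ℝ := fun i => if i = i0 then 1 else 0 with he0
  have he0sum : ∑ i, e0 i ^ 2 = 1 := by
    rw [he0]
    simp [apply_ite (· ^ 2)]
  have he0A : e0 ∈ A := by
    refine ⟨⟨{i0}, by simpa using hs, fun i hi => ?_⟩, he0sum⟩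
    rw [he0]
    simp only [mem_singleton] at hi
    simp [hi]
  have hne0A : -e0 ∈ A := by
    obtain ⟨⟨T, hT1, hT2⟩, hT3⟩ := he0A
    refine ⟨⟨T, hT1, fun i hi => by simp [hT2 i hi]⟩, ?_⟩
    simpa using hT3
  set z : ℕ → (Fin m → ℝ) := fun k => if b k = 0 then e0 else (lam k)⁻¹ • g k with hz
  have hsum_ite : ∀ k (c : Fin m → ℝ),
      ∑ i, (if i ∈ Blk m s k then c i else 0) = ∑ i ∈ Blk m s k, c i := by
    intro k c
    rw [Finset.sum_ite_mem, Finset.univ_inter]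
  have hbsum : ∀ k, ∑ i, g k i ^ 2 = b k := by
    intro k
    rw [hb]
    simp only [hg]
    rw [← hsum_ite k (fun i => y i ^ 2)]
    refine sum_congr rfl fun i _ => ?_
    split <;> simp
  have hzA : ∀ k, z k ∈ A := by
    intro k
    by_cases hbk : b k = 0
    · simp only [hz, if_pos hbk]; exact he0A
    · have hlampos : 0 < lam k := Real.sqrt_pos.2 (lt_of_le_of_ne (hb0 k) (Ne.symm hbk))
      refine ⟨⟨Blk m s k, card_Blk_le, fun i hi => ?_⟩, ?_⟩
      · simp only [hz, if_neg hbk, Pi.smul_apply, hg, if_neg hi, smul_zero]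
      · simp only [hz, if_neg hbk]
        have hcalc : ∑ i, ((lam k)⁻¹ • g k) i ^ 2 = (lam k)⁻¹ ^ 2 * ∑ i, g k i ^ 2 := by
          rw [Finset.mul_sum]
          exact sum_congr rfl fun i _ => by simp [mul_pow]
        rw [hcalc, hbsum k, inv_pow, hlam, Real.sq_sqrt (hb0 k), inv_mul_cancel₀ hbk]
  have hgz : ∀ k, lam k • z k = g k := by
    intro k
    by_cases hbk : b k = 0
    · have hg0 : g k = 0 := by
        funext i
        simp only [hg, Pi.zero_apply]
        split
        · rename_i hi
          have := (Finset.sum_eq_zero_iff_of_nonneg (fun j _ => sq_nonneg (y j))).1 hbk i hi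
          exact pow_eq_zero_iff (n := 2) (by norm_num) |>.1 this
        · rfl
      have hl0 : lam k = 0 := by
        show Real.sqrt (b k) = 0
        rw [hbk, Real.sqrt_zero]
      rw [hl0, hg0, zero_smul]
    · have hlk : lam k ≠ 0 :=
        ne_of_gt (Real.sqrt_pos.2 (lt_of_le_of_ne (hb0 k) (Ne.symm hbk)))
      rw [hz]
      simp only [if_neg hbk]
      rw [smul_smul, mul_inv_cancel₀ hlk, one_smul]
  have hysum : ∑ k ∈ range K, g k = y := by
    funext i
    rw [Finset.sum_apply]
    have hmem : i.val / s ∈ range K := mem_range.2 (Nat.lt_succ_of_le (Nat.div_le_div_right i.isLt.le))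
    calc ∑ k ∈ range K, g k i = ∑ k ∈ range K, if i.val / s = k then y i else 0 := by
          refine sum_congr rfl fun k _ => ?_
          simp only [hg]
          exact if_congr (mem_Blk hs) rfl rfl
      _ = y i := by rw [Finset.sum_ite_eq (range K) (i.val / s) (fun _ => y i), if_pos hmem]
  have hsqs : (0 : ℝ) < Real.sqrt s := Real.sqrt_pos.2 (by exact_mod_cast hs)
  have hstep : ∀ k, lam (k + 1) ≤ a k / Real.sqrt s := by
    intro k
    rcases eq_or_ne (Blk m s (k + 1)) ∅ with hemp | hne
    · have hb0' : b (k + 1) = 0 := by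
        show ∑ i ∈ Blk m s (k + 1), y i ^ 2 = 0
        rw [hemp, Finset.sum_empty]
      have hl0' : lam (k + 1) = 0 := by
        show Real.sqrt (b (k + 1)) = 0
        rw [hb0', Real.sqrt_zero]
      rw [hl0']
      positivity
    · obtain ⟨i1, hi1⟩ := Finset.nonempty_iff_ne_empty.2 hne
      have hi1' : (k + 1) * s ≤ i1.val := by
        simp only [Blk, mem_filter] at hi1
        exact hi1.2.1
      have hfull : (k + 1) * s ≤ m := le_of_lt (lt_of_le_of_lt hi1' i1.isLt)
      have hcard : (Blk m s k).card = s := card_Blk_eq hfull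
      have key : ∀ i ∈ Blk m s (k + 1), (s : ℝ) * |y i| ≤ a k := by
        intro i hi
        have hi' : (k + 1) * s ≤ i.val := by
          simp only [Blk, mem_filter] at hi
          exact hi.2.1
        have hle : ∑ j ∈ Blk m s k, |y i| ≤ ∑ j ∈ Blk m s k, |y j| := by
          refine sum_le_sum fun j hj => ?_
          have hj' : j.val < (k + 1) * s := by
            simp only [Blk, mem_filter] at hj
            exact hj.2.2
          exact hmono j i (Fin.le_def.2 (le_of_lt (lt_of_lt_of_le hj' hi')))
        rw [Finset.sum_const, hcard, nsmul_eq_mul] at hle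
        exact hle
      have hb1 : b (k + 1) ≤ a k ^ 2 / s := by
        have hterm : ∀ i ∈ Blk m s (k + 1), y i ^ 2 ≤ (a k / s) ^ 2 := by
          intro i hi
          have hspos : (0 : ℝ) < s := by exact_mod_cast hs
          have h0 : |y i| ≤ a k / s := by
            rw [le_div_iff₀ hspos]
            linarith [key i hi]
          calc y i ^ 2 = |y i| ^ 2 := (sq_abs _).symm
            _ ≤ (a k / s) ^ 2 := pow_le_pow_left₀ (abs_nonneg _) h0 2
        have hspos : (0 : ℝ) < s := by exact_mod_cast hs
        calc b (k + 1) = ∑ i ∈ Blk m s (k + 1), y i ^ 2 := rfl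
          _ ≤ ∑ _i ∈ Blk m s (k + 1), (a k / s) ^ 2 := sum_le_sum hterm
          _ = (Blk m s (k + 1)).card * (a k / s) ^ 2 := by rw [Finset.sum_const, nsmul_eq_mul]
          _ ≤ (s : ℝ) * (a k / s) ^ 2 := by
              have : ((Blk m s (k + 1)).card : ℝ) ≤ (s : ℝ) := by exact_mod_cast card_Blk_le
              nlinarith [sq_nonneg (a k / s)]
          _ = a k ^ 2 / s := by field_simp
      calc lam (k + 1) = Real.sqrt (b (k + 1)) := rfl
        _ ≤ Real.sqrt (a k ^ 2 / s) := Real.sqrt_le_sqrt hb1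
        _ = a k / Real.sqrt s := by
            rw [Real.sqrt_div (sq_nonneg _), Real.sqrt_sq (ha0 k)]
  have hsum_a : ∑ k ∈ range K, a k = ∑ i, |y i| := sum_Blk hs _
  have hL2 : ∑ k ∈ range K, lam k ≤ 2 := by
    have hsplit : ∑ k ∈ range K, lam k = (∑ k ∈ range (m / s), lam (k + 1)) + lam 0 := by
      rw [hK, Finset.sum_range_succ']
    have h01 : lam 0 ≤ 1 := by
      have hb01 : b 0 ≤ 1 := by
        rw [← h2, hb]
        exact sum_le_sum_of_subset_of_nonneg (subset_univ _) (fun i _ _ => sq_nonneg _)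
      calc lam 0 = Real.sqrt (b 0) := rfl
        _ ≤ Real.sqrt 1 := Real.sqrt_le_sqrt hb01
        _ = 1 := Real.sqrt_one
    have htail : ∑ k ∈ range (m / s), lam (k + 1) ≤ 1 := by
      calc ∑ k ∈ range (m / s), lam (k + 1)
          ≤ ∑ k ∈ range (m / s), a k / Real.sqrt s := sum_le_sum fun k _ => hstep k
        _ = (∑ k ∈ range (m / s), a k) / Real.sqrt s := by rw [Finset.sum_div]
        _ ≤ (∑ k ∈ range K, a k) / Real.sqrt s := by
            have := sum_le_sum_of_subset_of_nonneg
              (Finset.range_subset_range.2 (Nat.le_succ (m / s)) :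
                range (m / s) ⊆ range K) (fun k _ _ => ha0 k)
            gcongr
        _ ≤ Real.sqrt s / Real.sqrt s := by
            gcongr
            rw [hsum_a]; exact h1
        _ = 1 := div_self hsqs.ne'
    linarith
  set L := ∑ k ∈ range K, lam k with hLdef
  have hL0 : 0 ≤ L := sum_nonneg fun k _ => hlam0 k
  set w : ℕ → ℝ := fun k => if k < K then lam k else (2 - L) / 2 with hw
  set Z : ℕ → (Fin m → ℝ) := fun k => if k < K then z k else if k = K then e0 else -e0 with hZ
  have hw0 : ∀ k ∈ range (K + 2), 0 ≤ w k := by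
    intro k _
    simp only [hw]
    split
    · exact hlam0 k
    · linarith
  have hZA : ∀ k ∈ range (K + 2), Z k ∈ A := by
    intro k _
    simp only [hZ]
    split
    · exact hzA k
    · split
      · exact he0A
      · exact hne0A
  have hwK : ∑ k ∈ range K, w k = L := by
    rw [hLdef]
    exact sum_congr rfl fun k hk => by simp only [hw]; rw [if_pos (mem_range.1 hk)]
  have hK1 : ¬ K + 1 < K := Nat.not_lt.2 (Nat.le_succ K)
  have hwKval : w K = (2 - L) / 2 := by
    simp only [hw]
    rw [if_neg (lt_irrefl K)]
  have hwK1val : w (K + 1) = (2 - L) / 2 := by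
    simp only [hw]
    rw [if_neg hK1]
  have hZKval : Z K = e0 := by
    simp [hZ]
  have hZK1val : Z (K + 1) = -e0 := by
    simp [hZ, hK1, Nat.succ_ne_self]
  have hwsum : ∑ k ∈ range (K + 2), w k = 2 := by
    rw [Finset.sum_range_succ, Finset.sum_range_succ, hwK, hwKval, hwK1val]
    ring
  have hwz : ∑ k ∈ range (K + 2), w k • Z k = y := by
    rw [Finset.sum_range_succ, Finset.sum_range_succ]
    have e1 : ∑ k ∈ range K, w k • Z k = ∑ k ∈ range K, g k := by
      refine sum_congr rfl fun k hk => ?_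
      have hk' := mem_range.1 hk
      simp only [hw, hZ]
      rw [if_pos hk', if_pos hk']
      exact hgz k
    rw [e1, hysum, hwKval, hwK1val, hZKval, hZK1val, smul_neg]
    abel
  have hmem : (2 : ℝ)⁻¹ • y ∈ convexHull ℝ A := by
    have hc := Finset.centerMass_mem_convexHull (range (K + 2)) hw0
      (by rw [hwsum]; norm_num) hZA
    rw [Finset.centerMass, hwsum, hwz] at hc
    exact hc
  exact Set.mem_smul_set.2 ⟨(2 : ℝ)⁻¹ • y, hmem, by rw [smul_smul]; norm_num⟩

/-- Every unit vector whose ℓ₁ norm is at most √|I| (with |I| ≤ s) lies in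
twice the convex hull of the s-sparse unit vectors. -/
theorem l1ball_sphere_subset_convexHull {m : ℕ} (s : ℕ) (hs : 1 ≤ s) (hsm : s ≤ m)
    (I : Finset (Fin m)) (hI : I.card ≤ s) :
    {x : Fin m → ℝ | (∑ i, |x i|) ≤ Real.sqrt (I.card) ∧ (∑ i, x i ^ 2) = 1} ⊆
      (2 : ℝ) • convexHull ℝ
        ({x : Fin m → ℝ | (∃ T : Finset (Fin m), T.card ≤ s ∧ ∀ i ∉ T, x i = 0)
          ∧ (∑ i, x i ^ 2) = 1}) := by
  intro x hx
  obtain ⟨hx1, hx2⟩ := hx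
  set σ : Equiv.Perm (Fin m) := Tuple.sort (fun i => -|x i|) with hσ
  have hmono : ∀ i j : Fin m, i ≤ j → |x (σ j)| ≤ |x (σ i)| := by
    intro i j hij
    have := Tuple.monotone_sort (fun i => -|x i|) hij
    simp only [Function.comp_apply] at this
    linarith
  have h1 : ∑ i, |x (σ i)| ≤ Real.sqrt s := by
    rw [Equiv.sum_comp σ (fun i => |x i|)]
    exact hx1.trans (Real.sqrt_le_sqrt (by exact_mod_cast hI))
  have h2 : ∑ i, x (σ i) ^ 2 = 1 := by
    rw [Equiv.sum_comp σ (fun i => x i ^ 2)]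
    exact hx2
  have hy := sparse_aux s hs hsm (fun i => x (σ i)) h1 h2 hmono
  obtain ⟨c, hc, hyc⟩ := Set.mem_smul_set.1 hy
  set Lm : (Fin m → ℝ) →ₗ[ℝ] (Fin m → ℝ) := LinearMap.funLeft ℝ ℝ (⇑σ⁻¹) with hLm
  have hAsub : {x : Fin m → ℝ | (∃ T : Finset (Fin m), T.card ≤ s ∧ ∀ i ∉ T, x i = 0)
      ∧ (∑ i, x i ^ 2) = 1} ⊆ Lm ⁻¹' (convexHull ℝ {x : Fin m → ℝ |
        (∃ T : Finset (Fin m), T.card ≤ s ∧ ∀ i ∉ T, x i = 0) ∧ (∑ i, x i ^ 2) = 1}) := by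
    rintro u ⟨⟨T, hT, hT0⟩, hu2⟩
    apply subset_convexHull
    refine ⟨⟨T.image σ, le_trans Finset.card_image_le hT, fun i hi => ?_⟩, ?_⟩
    · show u (σ⁻¹ i) = 0
      apply hT0
      intro hmem
      exact hi (by simpa using Finset.mem_image_of_mem (⇑σ) hmem)
    · show ∑ i, u (σ⁻¹ i) ^ 2 = 1
      rw [Equiv.sum_comp σ⁻¹ (fun j => u j ^ 2)]
      exact hu2
  have hpre : convexHull ℝ {x : Fin m → ℝ |
        (∃ T : Finset (Fin m), T.card ≤ s ∧ ∀ i ∉ T, x i = 0) ∧ (∑ i, x i ^ 2) = 1} ⊆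
      Lm ⁻¹' (convexHull ℝ {x : Fin m → ℝ |
        (∃ T : Finset (Fin m), T.card ≤ s ∧ ∀ i ∉ T, x i = 0) ∧ (∑ i, x i ^ 2) = 1}) :=
    convexHull_min hAsub ((convex_convexHull ℝ _).linear_preimage Lm)
  refine Set.mem_smul_set.2 ⟨Lm c, hpre hc, ?_⟩
  funext i
  have h := congrFun hyc (σ⁻¹ i)
  simp only [Pi.smul_apply, smul_eq_mul, Equiv.apply_symm_apply] at h
  simpa [hLm, LinearMap.funLeft_apply] using h
end

section
/- For every $1 \le s \le m$ and every $\rho \in (0,1]$, the set $\sqrt{s}\, B_1^m \cap \rho B_2^m$ is contained in $(1+\rho)\,\mathrm{conv}(U_s \cap B_2^m)$, where $U_s$ is the set of $s$-sparse vectors in $\mathbb{R}^m$. -/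
open Finset Pointwise

private theorem add_mem_smulCH' {E : Type*} [AddCommGroup E] [Module ℝ E] {C : Set E}
    (h : Convex ℝ C) {u v : E} {a b : ℝ}
    (hu : u ∈ a • C) (hv : v ∈ b • C) (ha : 0 < a) (hb : 0 < b) :
    u + v ∈ (a + b) • C := by
  obtain ⟨u', hu', rfl⟩ := hu
  obtain ⟨v', hv', rfl⟩ := hv
  have hab : 0 < a + b := by linarith
  refine ⟨(a/(a+b)) • u' + (b/(a+b)) • v',
    h hu' hv' (by positivity) (by positivity) (by field_simp), ?_⟩
  show (a+b) • _ = a • u' + b • v'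
  rw [smul_add, smul_smul, smul_smul]
  congr 1 <;> congr 1 <;> field_simp

private theorem sparse_mem_smulCH' {m s : ℕ} (x : Fin m → ℝ) (T : Finset (Fin m))
    (hT : T.card ≤ s) (hsupp : ∀ i ∉ T, x i = 0) {t : ℝ} (ht : 0 < t)
    (hle : Real.sqrt (∑ i, x i ^ 2) ≤ t) :
    x ∈ t • convexHull ℝ
        ({x : Fin m → ℝ | (∃ T : Finset (Fin m), T.card ≤ s ∧ ∀ i ∉ T, x i = 0)
          ∧ (∑ i, x i ^ 2) ≤ 1}) := by
  rw [Set.mem_smul_set_iff_inv_smul_mem₀ ht.ne']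
  apply subset_convexHull
  constructor
  · exact ⟨T, hT, fun i hi => by simp [hsupp i hi]⟩
  · have h1 : ∑ i, x i ^ 2 ≤ t ^ 2 := by
      nlinarith [Real.sq_sqrt (by positivity : (0:ℝ) ≤ ∑ i, x i ^ 2),
        Real.sqrt_nonneg (∑ i, x i ^ 2)]
    have h2 : ∑ i, (t⁻¹ • x) i ^ 2 = t⁻¹ ^ 2 * ∑ i, x i ^ 2 := by
      rw [Finset.mul_sum]
      exact Finset.sum_congr rfl fun i _ => by
        show (t⁻¹ * x i) ^ 2 = _; ring
    rw [h2, inv_pow, inv_mul_le_iff₀ (by positivity), mul_one]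
    exact h1

private theorem exists_topset' {m s : ℕ} (hsm : s ≤ m) (x : Fin m → ℝ) :
    ∃ T : Finset (Fin m), T.card = s ∧ ∀ i ∈ T, ∀ j ∉ T, |x j| ≤ |x i| := by
  have hne : (Finset.univ.powersetCard s : Finset (Finset (Fin m))).Nonempty := by
    rw [Finset.powersetCard_nonempty]
    simpa using hsm
  obtain ⟨T, hTmem, hTmax⟩ := Finset.exists_max_image _ (fun T => ∑ i ∈ T, |x i|) hne
  rw [Finset.mem_powersetCard] at hTmem
  refine ⟨T, hTmem.2, fun i hi j hj => ?_⟩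
  by_contra hlt
  push_neg at hlt
  have hs1 : 1 ≤ s := hTmem.2 ▸ Finset.card_pos.mpr ⟨i, hi⟩
  have hji : j ∉ T.erase i := fun h => hj (Finset.mem_of_mem_erase h)
  have hcard : (insert j (T.erase i)).card = s := by
    rw [Finset.card_insert_of_notMem hji, Finset.card_erase_of_mem hi, hTmem.2]
    omega
  have h1 := hTmax (insert j (T.erase i))
    (Finset.mem_powersetCard.mpr ⟨Finset.subset_univ _, hcard⟩)
  rw [Finset.sum_insert hji] at h1
  have h2 : ∑ k ∈ T.erase i, |x k| + |x i| = ∑ k ∈ T, |x k| :=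
    Finset.sum_erase_add T _ hi
  linarith

private theorem maurey_aux {m s : ℕ} (hs : 1 ≤ s) (hsm : s ≤ m) :
    ∀ n : ℕ, ∀ (x : Fin m → ℝ) (b t : ℝ),
      (∀ i, |x i| ≤ b) →
      (Finset.univ.filter (fun i => x i ≠ 0)).card ≤ n →
      Real.sqrt s * b + (∑ i, |x i|) / Real.sqrt s ≤ t → 0 < t →
      x ∈ t • convexHull ℝ
        ({x : Fin m → ℝ | (∃ T : Finset (Fin m), T.card ≤ s ∧ ∀ i ∉ T, x i = 0)
          ∧ (∑ i, x i ^ 2) ≤ 1}) := by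
  have hsq : (0:ℝ) < Real.sqrt s := Real.sqrt_pos.mpr (by exact_mod_cast hs)
  have hsqsq : Real.sqrt s * Real.sqrt s = (s:ℝ) :=
    Real.mul_self_sqrt (by positivity)
  intro n
  induction n with
  | zero =>
    intro x b t hb hcard hbd ht
    have hx0 : x = 0 := by
      funext i
      show x i = 0
      by_contra hxi
      have : i ∈ Finset.univ.filter (fun i => x i ≠ 0) := by simp [hxi]
      have := Finset.card_pos.mpr ⟨i, this⟩
      omega
    subst hx0
    exact sparse_mem_smulCH' 0 ∅ (by simp) (by simp) ht (by simpa using ht.le)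
  | succ n ih =>
    intro x b t hb hcard hbd ht
    have hb0 : (0:ℝ) ≤ b := le_trans (abs_nonneg _) (hb ⟨0, by omega⟩)
    have hl1 : (0:ℝ) ≤ ∑ i, |x i| := Finset.sum_nonneg fun i _ => abs_nonneg _
    by_cases hsmall : (Finset.univ.filter (fun i => x i ≠ 0)).card ≤ s
    · -- x is already s-sparse
      apply sparse_mem_smulCH' x _ hsmall
        (fun i hi => by simpa using hi) ht
      have h1 : ∑ i, x i ^ 2 ≤ (s:ℝ) * b ^ 2 := by
        calc ∑ i, x i ^ 2
            = ∑ i ∈ Finset.univ.filter (fun i => x i ≠ 0), x i ^ 2 := by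
              rw [Finset.sum_filter]
              exact Finset.sum_congr rfl fun i _ => by
                by_cases h : x i = 0 <;> simp [h]
          _ ≤ ∑ _i ∈ Finset.univ.filter (fun i => x i ≠ 0), b ^ 2 :=
              Finset.sum_le_sum fun i _ => by
                have := hb i
                nlinarith [abs_nonneg (x i), sq_abs (x i)]
          _ = ((Finset.univ.filter (fun i => x i ≠ 0)).card : ℝ) * b ^ 2 := by
              rw [Finset.sum_const, nsmul_eq_mul]
          _ ≤ (s:ℝ) * b ^ 2 := by
              have : ((Finset.univ.filter (fun i => x i ≠ 0)).card : ℝ) ≤ (s:ℝ) := by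
                exact_mod_cast hsmall
              nlinarith
      calc Real.sqrt (∑ i, x i ^ 2) ≤ Real.sqrt ((s:ℝ) * b ^ 2) := Real.sqrt_le_sqrt h1
        _ = Real.sqrt s * b := by
            rw [Real.sqrt_mul (by positivity), Real.sqrt_sq hb0]
        _ ≤ t := le_trans (le_add_of_nonneg_right (by positivity)) hbd
    · push_neg at hsmall
      obtain ⟨T, hTcard, hTtop⟩ := exists_topset' hsm x
      -- T ⊆ support
      have hTsupp : ∀ i ∈ T, x i ≠ 0 := by
        intro i hi hxi
        obtain ⟨j, hjmem, hjT⟩ : ∃ j ∈ Finset.univ.filter (fun i => x i ≠ 0), j ∉ T := by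
          by_contra hc
          push_neg at hc
          have := Finset.card_le_card hc
          omega
        have := hTtop i hi j hjT
        rw [hxi, abs_zero] at this
        simp only [Finset.mem_filter] at hjmem
        exact hjmem.2 (abs_nonpos_iff.mp this)
      have hTsub : T ⊆ Finset.univ.filter (fun i => x i ≠ 0) := fun i hi => by
        simp [hTsupp i hi]
      set xT : Fin m → ℝ := fun i => if i ∈ T then x i else 0 with hxT
      set x' : Fin m → ℝ := fun i => if i ∈ T then 0 else x i with hx'
      have hsplit : x = xT + x' := by
        funext i
        by_cases h : i ∈ T <;> simp [hxT, hx', h]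
      set S := ∑ i ∈ T, |x i| with hS
      have hS0 : 0 ≤ S := Finset.sum_nonneg fun i _ => abs_nonneg _
      -- ℓ1 splitting
      have hl1x' : ∑ i, |x' i| = ∑ i, |x i| - S := by
        have h1 : ∀ i, |x' i| = |x i| - (if i ∈ T then |x i| else 0) := by
          intro i; by_cases h : i ∈ T <;> simp [hx', h]
        rw [Finset.sum_congr rfl fun i _ => h1 i, Finset.sum_sub_distrib,
          Finset.sum_ite_mem, Finset.univ_inter]
      -- S > 0
      have hSpos : 0 < S := by
        obtain ⟨i, hi⟩ : T.Nonempty := Finset.card_pos.mp (by omega)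
        exact lt_of_lt_of_le (abs_pos.mpr (hTsupp i hi))
          (Finset.single_le_sum (fun j _ => abs_nonneg (x j)) hi)
      -- b > 0
      have hbpos : 0 < b := by
        obtain ⟨i, hi⟩ : T.Nonempty := Finset.card_pos.mp (by omega)
        exact lt_of_lt_of_le (abs_pos.mpr (hTsupp i hi)) (hb i)
      -- entrywise bound on x'
      have hbound' : ∀ j, |x' j| ≤ S / s := by
        intro j
        by_cases h : j ∈ T
        · have : |x' j| = 0 := by simp [hx', h]
          rw [this]; positivity
        · have h2 : (s:ℝ) * |x j| ≤ S := by
            calc (s:ℝ) * |x j| = ∑ _i ∈ T, |x j| := by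
                  rw [Finset.sum_const, hTcard, nsmul_eq_mul]
              _ ≤ S := Finset.sum_le_sum fun i hi => hTtop i hi j h
          have h3 : |x' j| = |x j| := by simp [hx', h]
          rw [h3, le_div_iff₀ (by positivity : (0:ℝ) < (s:ℝ))]
          linarith
      -- support card of x'
      have hcard' : (Finset.univ.filter (fun i => x' i ≠ 0)).card ≤ n := by
        have hsub2 : Finset.univ.filter (fun i => x' i ≠ 0) ⊆
            (Finset.univ.filter (fun i => x i ≠ 0)) \ T := by
          intro i hi
          simp only [Finset.mem_filter, Finset.mem_univ, true_and] at hi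
          by_cases h : i ∈ T
          · exact absurd (by simp [hx', h]) hi
          · have : x' i = x i := by simp [hx', h]
            rw [this] at hi
            simp [h, hi]
        have := Finset.card_le_card hsub2
        rw [Finset.card_sdiff_of_subset hTsub, hTcard] at this
        omega
      -- head membership
      have hxT2 : Real.sqrt (∑ i, xT i ^ 2) ≤ Real.sqrt s * b := by
        have h1 : ∑ i, xT i ^ 2 ≤ (s:ℝ) * b ^ 2 := by
          calc ∑ i, xT i ^ 2 = ∑ i ∈ T, x i ^ 2 := by
                rw [Finset.sum_congr rfl (fun i _ => by
                  show xT i ^ 2 = if i ∈ T then x i ^ 2 else 0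
                  by_cases h : i ∈ T <;> simp [hxT, h]),
                  Finset.sum_ite_mem, Finset.univ_inter]
            _ ≤ ∑ _i ∈ T, b ^ 2 := Finset.sum_le_sum fun i _ => by
                have := hb i
                nlinarith [abs_nonneg (x i), sq_abs (x i)]
            _ = (s:ℝ) * b ^ 2 := by rw [Finset.sum_const, hTcard, nsmul_eq_mul]
        calc Real.sqrt (∑ i, xT i ^ 2) ≤ Real.sqrt ((s:ℝ) * b ^ 2) := Real.sqrt_le_sqrt h1
          _ = Real.sqrt s * b := by
            rw [Real.sqrt_mul (by positivity), Real.sqrt_sq hb0]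
      have hhead : xT ∈ (Real.sqrt s * b) • convexHull ℝ
          ({x : Fin m → ℝ | (∃ T : Finset (Fin m), T.card ≤ s ∧ ∀ i ∉ T, x i = 0)
            ∧ (∑ i, x i ^ 2) ≤ 1}) :=
        sparse_mem_smulCH' xT T hTcard.le (fun i hi => by simp [hxT, hi])
          (by positivity) hxT2
      -- coefficient identity
      have hkey : Real.sqrt s * (S / s) = S / Real.sqrt s := by
        field_simp
        linear_combination hsqsq
      -- tail membership via IH
      have htpos : 0 < t - Real.sqrt s * b := by
        have h1 : S / Real.sqrt s ≤ (∑ i, |x i|) / Real.sqrt s := by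
          gcongr
          linarith [hl1x', Finset.sum_nonneg (fun i (_ : i ∈ Finset.univ) => abs_nonneg (x' i))]
        have h2 : 0 < S / Real.sqrt s := by positivity
        linarith
      have htail : x' ∈ (t - Real.sqrt s * b) • convexHull ℝ
          ({x : Fin m → ℝ | (∃ T : Finset (Fin m), T.card ≤ s ∧ ∀ i ∉ T, x i = 0)
            ∧ (∑ i, x i ^ 2) ≤ 1}) := by
        apply ih x' (S / s) _ hbound' hcard' ?_ htpos
        rw [hkey, hl1x', sub_div]
        have : S / Real.sqrt s + ((∑ i, |x i|) / Real.sqrt s - S / Real.sqrt s)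
            = (∑ i, |x i|) / Real.sqrt s := by ring
        rw [this]
        linarith
      have hcomb := add_mem_smulCH' (convex_convexHull ℝ _) hhead htail
        (by positivity) htpos
      have heq : Real.sqrt s * b + (t - Real.sqrt s * b) = t := by ring
      rw [heq] at hcomb
      rw [hsplit]
      exact hcomb

/-- √s B₁ᵐ ∩ ρ B₂ᵐ ⊆ (1+ρ) conv(U_s ∩ B₂ᵐ) for ρ ∈ (0,1]. -/
theorem l1ball_l2ball_subset_convexHull {m : ℕ} (s : ℕ) (hs : 1 ≤ s) (hsm : s ≤ m)
    (ρ : ℝ) (hρ0 : 0 < ρ) (hρ1 : ρ ≤ 1) :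
    {x : Fin m → ℝ | (∑ i, |x i|) ≤ Real.sqrt s ∧ Real.sqrt (∑ i, x i ^ 2) ≤ ρ} ⊆
      (1 + ρ) • convexHull ℝ
        ({x : Fin m → ℝ | (∃ T : Finset (Fin m), T.card ≤ s ∧ ∀ i ∉ T, x i = 0)
          ∧ (∑ i, x i ^ 2) ≤ 1}) := by
  have hsq : (0:ℝ) < Real.sqrt s := Real.sqrt_pos.mpr (by exact_mod_cast hs)
  have hsqsq : Real.sqrt s * Real.sqrt s = (s:ℝ) :=
    Real.mul_self_sqrt (by positivity)
  rintro x ⟨hx1, hx2⟩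
  obtain ⟨T, hTcard, hTtop⟩ := exists_topset' hsm x
  set xT : Fin m → ℝ := fun i => if i ∈ T then x i else 0 with hxT
  set x' : Fin m → ℝ := fun i => if i ∈ T then 0 else x i with hx'
  have hsplit : x = xT + x' := by
    funext i
    by_cases h : i ∈ T <;> simp [hxT, hx', h]
  set S := ∑ i ∈ T, |x i| with hS
  have hS0 : 0 ≤ S := Finset.sum_nonneg fun i _ => abs_nonneg _
  have hl1x' : ∑ i, |x' i| = ∑ i, |x i| - S := by
    have h1 : ∀ i, |x' i| = |x i| - (if i ∈ T then |x i| else 0) := by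
      intro i; by_cases h : i ∈ T <;> simp [hx', h]
    rw [Finset.sum_congr rfl fun i _ => h1 i, Finset.sum_sub_distrib,
      Finset.sum_ite_mem, Finset.univ_inter]
  -- head: ℓ2 bound
  have hxT2 : Real.sqrt (∑ i, xT i ^ 2) ≤ ρ := by
    refine le_trans (Real.sqrt_le_sqrt ?_) hx2
    apply Finset.sum_le_sum
    intro i _
    by_cases h : i ∈ T <;> simp [hxT, h] <;> positivity
  have hhead : xT ∈ ρ • convexHull ℝ
      ({x : Fin m → ℝ | (∃ T : Finset (Fin m), T.card ≤ s ∧ ∀ i ∉ T, x i = 0)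
        ∧ (∑ i, x i ^ 2) ≤ 1}) :=
    sparse_mem_smulCH' xT T hTcard.le (fun i hi => by simp [hxT, hi]) hρ0 hxT2
  -- tail via maurey_aux with t = 1
  have hbound' : ∀ j, |x' j| ≤ S / s := by
    intro j
    by_cases h : j ∈ T
    · have : |x' j| = 0 := by simp [hx', h]
      rw [this]; positivity
    · have h2 : (s:ℝ) * |x j| ≤ S := by
        calc (s:ℝ) * |x j| = ∑ _i ∈ T, |x j| := by
              rw [Finset.sum_const, hTcard, nsmul_eq_mul]
          _ ≤ S := Finset.sum_le_sum fun i hi => hTtop i hi j h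
      have h3 : |x' j| = |x j| := by simp [hx', h]
      rw [h3, le_div_iff₀ (by positivity : (0:ℝ) < (s:ℝ))]
      linarith
  have hkey : Real.sqrt s * (S / s) = S / Real.sqrt s := by
    field_simp
    linear_combination S * hsqsq
  have htail : x' ∈ (1:ℝ) • convexHull ℝ
      ({x : Fin m → ℝ | (∃ T : Finset (Fin m), T.card ≤ s ∧ ∀ i ∉ T, x i = 0)
        ∧ (∑ i, x i ^ 2) ≤ 1}) := by
    apply maurey_aux hs hsm _ x' (S / s) 1 hbound' le_rfl ?_ one_pos
    rw [hkey, hl1x', sub_div]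
    have h1 : S / Real.sqrt s + ((∑ i, |x i|) / Real.sqrt s - S / Real.sqrt s)
        = (∑ i, |x i|) / Real.sqrt s := by ring
    rw [h1]
    calc (∑ i, |x i|) / Real.sqrt s ≤ Real.sqrt s / Real.sqrt s := by gcongr
      _ = 1 := div_self hsq.ne'
  have hcomb := add_mem_smulCH' (convex_convexHull ℝ _) hhead htail hρ0 one_pos
  have heq : ρ + (1:ℝ) = 1 + ρ := by ring
  rw [heq] at hcomb
  rw [hsplit]
  exact hcomb
end

section
/- Let $0 < \delta$, $0 < s < m/2$, and let $\Delta$ be an $m \times m$ real matrix such that $|u^T \Delta v| \le \delta$ for all unit vectors $u, v$ each supported on at most $s$ coordinates. Then for every $v \in \sqrt{s}\,B_1^m \cap B_2^m$ (i.e., $\|v\|_1 \le \sqrt{s}$ and $\|v\|_2 \le 1$), we have $|v^T \Delta v| \le 4\delta$. -/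
open Finset Matrix

/-- expand the bilinear form as a double sum -/
lemma bilin_expand {n : ℕ} (A : Matrix (Fin n) (Fin n) ℝ) (x y : Fin n → ℝ) :
    x ⬝ᵥ A.mulVec y = ∑ i, ∑ j, x i * A i j * y j := by
  simp [dotProduct, mulVec, Finset.mul_sum, mul_assoc]

/-- the scaled bilinear bound for sparse vectors -/
lemma sparse_bilin {m s : ℕ} {δ : ℝ} (hδ : 0 < δ) (Δ : Matrix (Fin m) (Fin m) ℝ)
    (hΔ : ∀ u v : Fin m → ℝ,
      (∑ i, u i ^ 2) = 1 → (∑ i, v i ^ 2) = 1 →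
      (∃ T : Finset (Fin m), T.card ≤ s ∧ ∀ i ∉ T, u i = 0) →
      (∃ T : Finset (Fin m), T.card ≤ s ∧ ∀ i ∉ T, v i = 0) →
      |u ⬝ᵥ Δ.mulVec v| ≤ δ)
    (x y : Fin m → ℝ)
    (hx : ∃ T : Finset (Fin m), T.card ≤ s ∧ ∀ i ∉ T, x i = 0)
    (hy : ∃ T : Finset (Fin m), T.card ≤ s ∧ ∀ i ∉ T, y i = 0) :
    |x ⬝ᵥ Δ.mulVec y| ≤ δ * (Real.sqrt (∑ i, x i ^ 2) * Real.sqrt (∑ i, y i ^ 2)) := by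
  have hx2 : (0:ℝ) ≤ ∑ i, x i ^ 2 := Finset.sum_nonneg fun i _ => sq_nonneg _
  have hy2 : (0:ℝ) ≤ ∑ i, y i ^ 2 := Finset.sum_nonneg fun i _ => sq_nonneg _
  rcases eq_or_lt_of_le hx2 with h0 | hxpos
  · have hx0 : x = 0 := by
      funext i
      have := (Finset.sum_eq_zero_iff_of_nonneg (fun i _ => sq_nonneg (x i))).1 h0.symm i (mem_univ i)
      exact pow_eq_zero_iff (n := 2) (by norm_num) |>.1 this
    rw [hx0]
    simp
    try positivity
  rcases eq_or_lt_of_le hy2 with h0 | hypos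
  · have hy0 : y = 0 := by
      funext i
      have := (Finset.sum_eq_zero_iff_of_nonneg (fun i _ => sq_nonneg (y i))).1 h0.symm i (mem_univ i)
      exact pow_eq_zero_iff (n := 2) (by norm_num) |>.1 this
    rw [hy0]
    simp
    try positivity
  set nx := Real.sqrt (∑ i, x i ^ 2) with hnx
  set ny := Real.sqrt (∑ i, y i ^ 2) with hny
  have hnxpos : 0 < nx := Real.sqrt_pos.2 hxpos
  have hnypos : 0 < ny := Real.sqrt_pos.2 hypos
  have hnxsq : nx ^ 2 = ∑ i, x i ^ 2 := Real.sq_sqrt hx2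
  have hnysq : ny ^ 2 = ∑ i, y i ^ 2 := Real.sq_sqrt hy2
  have key := hΔ (nx⁻¹ • x) (ny⁻¹ • y)
    (by
      simp only [Pi.smul_apply, smul_eq_mul, mul_pow]
      rw [← Finset.mul_sum, ← hnxsq]
      field_simp)
    (by
      simp only [Pi.smul_apply, smul_eq_mul, mul_pow]
      rw [← Finset.mul_sum, ← hnysq]
      field_simp)
    (by
      obtain ⟨T, hT, hT0⟩ := hx
      exact ⟨T, hT, fun i hi => by simp [hT0 i hi]⟩)
    (by
      obtain ⟨T, hT, hT0⟩ := hy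
      exact ⟨T, hT, fun i hi => by simp [hT0 i hi]⟩)
  rw [Matrix.mulVec_smul, smul_dotProduct, dotProduct_smul, smul_eq_mul,
    smul_eq_mul, abs_mul, abs_mul, abs_of_pos (inv_pos.2 hnxpos), abs_of_pos (inv_pos.2 hnypos)]
    at key
  calc |x ⬝ᵥ Δ.mulVec y| = (nx * ny) * (nx⁻¹ * (ny⁻¹ * |x ⬝ᵥ Δ.mulVec y|)) := by
        field_simp
    _ ≤ (nx * ny) * δ := by
        apply mul_le_mul_of_nonneg_left key (by positivity)
    _ = δ * (nx * ny) := by ring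

lemma dot_sum_left {n : ℕ} (K : Finset ℕ) (f : ℕ → Fin n → ℝ) (y : Fin n → ℝ)
    (x : Fin n → ℝ) (hx : ∀ i, x i = ∑ k ∈ K, f k i) : x ⬝ᵥ y = ∑ k ∈ K, f k ⬝ᵥ y := by
  simp only [dotProduct, hx, Finset.sum_mul]
  exact Finset.sum_comm

lemma dot_sum_right {n : ℕ} (K : Finset ℕ) (f : ℕ → Fin n → ℝ) (y : Fin n → ℝ)
    (x : Fin n → ℝ) (hx : ∀ i, x i = ∑ k ∈ K, f k i) : y ⬝ᵥ x = ∑ k ∈ K, y ⬝ᵥ f k := by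
  simp only [dotProduct, hx, Finset.mul_sum]
  exact Finset.sum_comm

/-- If |uᵀΔv| ≤ δ for all s-sparse unit vectors u, v, then |vᵀΔv| ≤ 4δ for all
v with ‖v‖₁ ≤ √s and ‖v‖₂ ≤ 1. -/
theorem quadratic_form_bound_on_l1l2_ball {m : ℕ} (s : ℕ) (hs : 0 < s)
    (hsm : (s : ℝ) < m / 2) (δ : ℝ) (hδ : 0 < δ) (Δ : Matrix (Fin m) (Fin m) ℝ)
    (hΔ : ∀ u v : Fin m → ℝ,
      (∑ i, u i ^ 2) = 1 → (∑ i, v i ^ 2) = 1 →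
      (∃ T : Finset (Fin m), T.card ≤ s ∧ ∀ i ∉ T, u i = 0) →
      (∃ T : Finset (Fin m), T.card ≤ s ∧ ∀ i ∉ T, v i = 0) →
      |u ⬝ᵥ Δ.mulVec v| ≤ δ) :
    ∀ v : Fin m → ℝ, (∑ i, |v i|) ≤ Real.sqrt s → (∑ i, v i ^ 2) ≤ 1 →
      |v ⬝ᵥ Δ.mulVec v| ≤ 4 * δ := by
  intro v hv1 hv2
  -- sorting permutation: |v (σ i)| is antitone in i
  set σ : Equiv.Perm (Fin m) := Tuple.sort (fun i => -|v i|) with hσ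
  have hmono : ∀ i j : Fin m, i ≤ j → |v (σ j)| ≤ |v (σ i)| := by
    intro i j hij
    have := Tuple.monotone_sort (fun i => -|v i|) hij
    simpa using this
  -- the blocks
  set u : ℕ → Fin m → ℝ := fun k i => if ((σ.symm i : Fin m) : ℕ) / s = k then v i else 0
    with hu
  have hm : 0 < m := by
    rcases Nat.eq_zero_or_pos m with h | h
    · subst h; simp at hsm; nlinarith [hsm, (Nat.cast_pos (α := ℝ)).2 hs]
    · exact h
  -- decomposition
  have hdecomp : ∀ i, (∑ k ∈ range m, u k i) = v i := by
    intro i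
    simp only [hu, Finset.sum_ite_eq, Finset.mem_range]
    rw [if_pos]
    exact lt_of_le_of_lt (Nat.div_le_self _ _) (Fin.is_lt _)
  -- block supports
  set T : ℕ → Finset (Fin m) := fun k => univ.filter (fun i => ((σ.symm i : Fin m) : ℕ) / s = k)
    with hT
  set J : ℕ → Finset (Fin m) := fun k => univ.filter (fun j : Fin m => (j : ℕ) / s = k) with hJ
  have hTJ : ∀ k, T k = (J k).map σ.toEmbedding := by
    intro k
    ext i
    simp only [hT, hJ, Finset.mem_filter, Finset.mem_map, Finset.mem_univ, true_and,
      Equiv.coe_toEmbedding]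
    constructor
    · intro h
      exact ⟨σ.symm i, h, σ.apply_symm_apply i⟩
    · rintro ⟨j, hj, rfl⟩
      simpa using hj
  have hdiv : ∀ (j k : ℕ), j / s = k ↔ k * s ≤ j ∧ j < (k + 1) * s := by
    intro j k
    constructor
    · intro h
      constructor
      · exact (Nat.le_div_iff_mul_le hs).1 h.ge
      · exact (Nat.div_lt_iff_lt_mul hs).1 (h ▸ Nat.lt_succ_self k)
    · rintro ⟨h1, h2⟩
      exact Nat.div_eq_of_lt_le h1 h2
  -- cardinality bounds for blocks
  have hIcoCard : ∀ k : ℕ, (Finset.Ico (k * s) ((k + 1) * s)).card = s := by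
    intro k
    rw [Nat.card_Ico]
    have : (k + 1) * s = k * s + s := by ring
    omega
  have hJcard_le : ∀ k, (J k).card ≤ s := by
    intro k
    have h1 : ∀ j ∈ J k, (j : ℕ) ∈ Finset.Ico (k * s) ((k + 1) * s) := by
      intro j hj
      simp only [hJ, Finset.mem_filter] at hj
      rw [Finset.mem_Ico]
      exact (hdiv _ _).1 hj.2
    have h2 : Set.InjOn (fun j : Fin m => (j : ℕ)) (J k) := fun a _ b _ hab =>
      Fin.val_injective hab
    exact (Finset.card_le_card_of_injOn _ h1 h2).trans_eq (hIcoCard k)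
  have hJcard_eq : ∀ k, (k + 1) * s ≤ m → (J k).card = s := by
    intro k hk
    have : (Finset.Ico (k * s) ((k + 1) * s)).card ≤ (J k).card := by
      refine Finset.card_le_card_of_injOn (fun t => Fin.mk (t % m) (Nat.mod_lt t hm)) ?_ ?_
      · intro t ht
        rw [Finset.mem_coe, Finset.mem_Ico] at ht
        have htm : t < m := lt_of_lt_of_le ht.2 hk
        simp only [Finset.mem_coe, hJ, Finset.mem_filter, Finset.mem_univ, true_and]
        rw [Nat.mod_eq_of_lt htm]
        exact (hdiv t k).2 ⟨ht.1, ht.2⟩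
      · intro a ha b hb hab
        simp only [Finset.coe_Ico, Set.mem_Ico] at ha hb
        have ham : a < m := lt_of_lt_of_le ha.2 hk
        have hbm : b < m := lt_of_lt_of_le hb.2 hk
        simp only [Fin.mk.injEq] at hab
        rwa [Nat.mod_eq_of_lt ham, Nat.mod_eq_of_lt hbm] at hab
    exact le_antisymm (hJcard_le k) ((hIcoCard k) ▸ this)
  have hTcard : ∀ k, (T k).card = (J k).card := by
    intro k; rw [hTJ k, Finset.card_map]
  -- support of u k
  have hsupp : ∀ k, ∀ i ∉ T k, u k i = 0 := by
    intro k i hi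
    simp only [hT, Finset.mem_filter, Finset.mem_univ, true_and] at hi
    simp only [hu, if_neg hi]
  -- L1 norms of blocks
  set L : ℕ → ℝ := fun k => ∑ i, |u k i| with hL
  have hLnn : ∀ k, 0 ≤ L k := fun k => Finset.sum_nonneg fun i _ => abs_nonneg _
  have hLsum : ∑ k ∈ range m, L k = ∑ i, |v i| := by
    rw [hL, Finset.sum_comm]
    apply Finset.sum_congr rfl
    intro i _
    have : ∀ k, |u k i| = if ((σ.symm i : Fin m) : ℕ) / s = k then |v i| else 0 := by
      intro k
      simp only [hu]
      split <;> simp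
    simp only [this, Finset.sum_ite_eq, Finset.mem_range]
    rw [if_pos (lt_of_le_of_lt (Nat.div_le_self _ _) (Fin.is_lt _))]
  -- L2 norms of blocks
  set a : ℕ → ℝ := fun k => Real.sqrt (∑ i, (u k i) ^ 2) with ha
  have hann : ∀ k, 0 ≤ a k := fun k => Real.sqrt_nonneg _
  have ha0 : a 0 ≤ 1 := by
    rw [ha]
    have : (∑ i, (u 0 i) ^ 2) ≤ 1 := by
      refine le_trans (Finset.sum_le_sum fun i _ => ?_) hv2
      simp only [hu]
      split <;> simp [sq_nonneg]
    calc Real.sqrt (∑ i, (u 0 i) ^ 2) ≤ Real.sqrt 1 := Real.sqrt_le_sqrt this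
      _ = 1 := Real.sqrt_one
  have hastep : ∀ k, a (k + 1) ≤ L k / Real.sqrt s := by
    intro k
    have hsq : 0 < Real.sqrt s := Real.sqrt_pos.2 (by exact_mod_cast hs)
    by_cases hzero : ∀ i, u (k + 1) i = 0
    · have : a (k + 1) = 0 := by simp [ha, hzero]
      rw [this]
      positivity
    push_neg at hzero
    obtain ⟨i₀, hi₀⟩ := hzero
    have hi₀T : ((σ.symm i₀ : Fin m) : ℕ) / s = k + 1 := by
      by_contra h
      exact hi₀ (by simp [hu, if_neg h])
    -- so block k is full
    have hfull : (k + 1) * s ≤ m := by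
      have := ((hdiv _ _).1 hi₀T).1
      have h2 : ((σ.symm i₀ : Fin m) : ℕ) < m := Fin.is_lt _
      omega
    -- pointwise bound on block k+1 entries
    have hptwise : ∀ i ∈ T (k + 1), |v i| * s ≤ L k := by
      intro i hi
      simp only [hT, Finset.mem_filter, Finset.mem_univ, true_and] at hi
      have hbound : ∀ j ∈ J k, |v i| ≤ |v (σ j)| := by
        intro j hj
        simp only [hJ, Finset.mem_filter, Finset.mem_univ, true_and] at hj
        have hlt : (j : ℕ) < ((σ.symm i : Fin m) : ℕ) := by
          have h1 := (hdiv _ _).1 hj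
          have h2 := (hdiv _ _).1 hi
          omega
        have := hmono j (σ.symm i) (le_of_lt hlt)
        rwa [Equiv.apply_symm_apply] at this
      have hLk : L k = ∑ j ∈ J k, |v (σ j)| := by
        have e : ∀ i' : Fin m, |u k i'| =
            if ((σ.symm i' : Fin m) : ℕ) / s = k then |v i'| else 0 := by
          intro i'
          simp only [hu]
          split <;> simp
        have e2 : L k = ∑ i' ∈ T k, |v i'| := by
          simp only [hL, e, hT]
          rw [← Finset.sum_filter]
        rw [e2, hTJ k, Finset.sum_map]
        rfl
      calc |v i| * s = ∑ _j ∈ J k, |v i| := by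
            rw [Finset.sum_const, hJcard_eq k hfull, nsmul_eq_mul, mul_comm]
        _ ≤ ∑ j ∈ J k, |v (σ j)| := Finset.sum_le_sum hbound
        _ = L k := hLk.symm
    -- sum of squares bound
    have hsums : (∑ i, (u (k + 1) i) ^ 2) ≤ L k ^ 2 / s := by
      have h1 : (∑ i, (u (k + 1) i) ^ 2) = ∑ i ∈ T (k + 1), (v i) ^ 2 := by
        have e : ∀ i' : Fin m, (u (k+1) i') ^ 2 =
            if ((σ.symm i' : Fin m) : ℕ) / s = k + 1 then (v i') ^ 2 else 0 := by
          intro i'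
          simp only [hu]
          split <;> simp
        simp only [e, hT]
        rw [← Finset.sum_filter]
      rw [h1]
      have h2 : ∀ i ∈ T (k + 1), (v i) ^ 2 ≤ (L k / s) ^ 2 := by
        intro i hi
        have := hptwise i hi
        have hvnn : 0 ≤ |v i| := abs_nonneg _
        have hsre : (0:ℝ) < s := by exact_mod_cast hs
        have hle : |v i| ≤ L k / s := by
          rw [le_div_iff₀ hsre]
          exact this
        calc (v i) ^ 2 = |v i| ^ 2 := (sq_abs _).symm
          _ ≤ (L k / s) ^ 2 := by
              apply pow_le_pow_left₀ hvnn hle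
      calc ∑ i ∈ T (k + 1), (v i) ^ 2 ≤ ∑ _i ∈ T (k + 1), (L k / s) ^ 2 :=
            Finset.sum_le_sum h2
        _ = (T (k + 1)).card * (L k / s) ^ 2 := by
            rw [Finset.sum_const, nsmul_eq_mul]
        _ ≤ s * (L k / s) ^ 2 := by
            apply mul_le_mul_of_nonneg_right _ (sq_nonneg _)
            exact_mod_cast (hTcard (k+1)) ▸ hJcard_le (k+1)
        _ = L k ^ 2 / s := by
            have hsre : (0:ℝ) < s := by exact_mod_cast hs
            field_simp
    rw [ha]
    have hsre : (0:ℝ) < s := by exact_mod_cast hs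
    calc Real.sqrt (∑ i, (u (k + 1) i) ^ 2) ≤ Real.sqrt (L k ^ 2 / s) :=
          Real.sqrt_le_sqrt hsums
      _ = L k / Real.sqrt s := by
          rw [Real.sqrt_div (sq_nonneg _), Real.sqrt_sq (hLnn k)]
  -- total L2 budget
  have hasum : ∑ k ∈ range m, a k ≤ 2 := by
    have hsq : 0 < Real.sqrt s := Real.sqrt_pos.2 (by exact_mod_cast hs)
    have hm1 : m = (m - 1) + 1 := by omega
    rw [hm1, Finset.sum_range_succ']
    have h1 : ∑ i ∈ range (m - 1), a (i + 1) ≤ ∑ i ∈ range (m - 1), L i / Real.sqrt s :=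
      Finset.sum_le_sum fun i _ => hastep i
    have h2 : ∑ i ∈ range (m - 1), L i / Real.sqrt s
        = (∑ i ∈ range (m - 1), L i) / Real.sqrt s := by
      rw [Finset.sum_div]
    have h3 : ∑ i ∈ range (m - 1), L i ≤ ∑ i ∈ range m, L i :=
      Finset.sum_le_sum_of_subset_of_nonneg
        (Finset.range_subset_range.2 (by omega)) (fun i _ _ => hLnn i)
    have h4 : (∑ i ∈ range m, L i) ≤ Real.sqrt s := by rw [hLsum]; exact hv1
    have h5 : (∑ i ∈ range (m - 1), L i) / Real.sqrt s ≤ 1 := by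
      rw [div_le_one hsq]
      exact h3.trans h4
    have := h1.trans (h2.le.trans h5)
    linarith [ha0]
  have hann2 : 0 ≤ ∑ k ∈ range m, a k := Finset.sum_nonneg fun k _ => hann k
  -- bilinear decomposition
  have key1 : ∀ x : Fin m → ℝ,
      x ⬝ᵥ Δ.mulVec v = ∑ b ∈ range m, x ⬝ᵥ Δ.mulVec (u b) := by
    intro x
    apply dot_sum_right (range m) (fun b => Δ.mulVec (u b)) x (Δ.mulVec v)
    intro i
    show (Δ.mulVec v) i = ∑ b ∈ range m, (Δ.mulVec (u b)) i
    simp only [mulVec, dotProduct]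
    calc ∑ j, Δ i j * v j = ∑ j, ∑ b ∈ range m, Δ i j * u b j := by
          refine Finset.sum_congr rfl fun j _ => ?_
          rw [← hdecomp j, Finset.mul_sum]
      _ = ∑ b ∈ range m, ∑ j, Δ i j * u b j := Finset.sum_comm
  have hsplit : v ⬝ᵥ Δ.mulVec v
      = ∑ jj ∈ range m, ∑ kk ∈ range m, u jj ⬝ᵥ Δ.mulVec (u kk) := by
    rw [dot_sum_left (range m) u (Δ.mulVec v) v (fun i => (hdecomp i).symm)]
    exact Finset.sum_congr rfl fun jj _ => key1 (u jj)
  have hterm : ∀ jj kk : ℕ, |u jj ⬝ᵥ Δ.mulVec (u kk)| ≤ δ * (a jj * a kk) := by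
    intro jj kk
    exact sparse_bilin hδ Δ hΔ (u jj) (u kk)
      ⟨T jj, (hTcard jj) ▸ hJcard_le jj, hsupp jj⟩
      ⟨T kk, (hTcard kk) ▸ hJcard_le kk, hsupp kk⟩
  calc |v ⬝ᵥ Δ.mulVec v|
      = |∑ jj ∈ range m, ∑ kk ∈ range m, u jj ⬝ᵥ Δ.mulVec (u kk)| := by rw [hsplit]
    _ ≤ ∑ jj ∈ range m, |∑ kk ∈ range m, u jj ⬝ᵥ Δ.mulVec (u kk)| :=
        Finset.abs_sum_le_sum_abs
          (fun jj => ∑ kk ∈ range m, u jj ⬝ᵥ Δ.mulVec (u kk)) (range m)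
    _ ≤ ∑ jj ∈ range m, ∑ kk ∈ range m, |u jj ⬝ᵥ Δ.mulVec (u kk)| :=
        by
          refine Finset.sum_le_sum fun jj _ => ?_
          exact Finset.abs_sum_le_sum_abs _ _
    _ ≤ ∑ jj ∈ range m, ∑ kk ∈ range m, δ * (a jj * a kk) :=
        Finset.sum_le_sum fun jj _ => Finset.sum_le_sum fun kk _ => hterm jj kk
    _ = δ * ((∑ jj ∈ range m, a jj) * (∑ kk ∈ range m, a kk)) := by
        simp only [Finset.mul_sum, Finset.sum_mul, mul_assoc]
        rw [Finset.sum_comm]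
    _ ≤ δ * 4 := by
        have h44 : (∑ jj ∈ range m, a jj) * (∑ kk ∈ range m, a kk) ≤ 4 := by
          nlinarith [hasum, hann2]
        exact mul_le_mul_of_nonneg_left h44 hδ.le
    _ = 4 * δ := by ring
end

section
/- Let $\delta > 0$, $0 < s < m/2$, and let $\Delta$ be an $m \times m$ matrix with $|u^T \Delta v| \le \delta$ for all unit vectors $u, v$ each with at most $s$ nonzero coordinates. Then for every $v \in \mathbb{R}^m$ with $\|v\|_1 \le \sqrt{s}\,\|v\|_2$, we have $|v^T \Delta v| \le 4\delta \|v\|_2^2$. -/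
open Finset Matrix

private lemma dot_sum_left_s7 {m : ℕ} (F : Finset ℕ) (f : ℕ → Fin m → ℝ) (x : Fin m → ℝ) :
    (∑ j ∈ F, f j) ⬝ᵥ x = ∑ j ∈ F, f j ⬝ᵥ x := by
  simp only [dotProduct, Finset.sum_apply, Finset.sum_mul]
  exact Finset.sum_comm

private lemma dot_sum_right_s7 {m : ℕ} (Δ : Matrix (Fin m) (Fin m) ℝ) (G : Finset ℕ)
    (g : ℕ → Fin m → ℝ) (x : Fin m → ℝ) :
    x ⬝ᵥ Δ.mulVec (∑ k ∈ G, g k) = ∑ k ∈ G, x ⬝ᵥ Δ.mulVec (g k) := by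
  rw [show Δ.mulVec (∑ k ∈ G, g k) = ∑ k ∈ G, Δ.mulVec (g k) by
    simp only [← Matrix.mulVecLin_apply]; exact map_sum _ _ _]
  simp only [dotProduct, Finset.sum_apply, Finset.mul_sum]
  exact Finset.sum_comm

private lemma sparse_bilinear {m s : ℕ} {δ : ℝ} (hδ : 0 < δ)
    {Δ : Matrix (Fin m) (Fin m) ℝ}
    (hΔ : ∀ u v : Fin m → ℝ,
      (∑ i, u i ^ 2) = 1 → (∑ i, v i ^ 2) = 1 →
      (∃ T : Finset (Fin m), T.card ≤ s ∧ ∀ i ∉ T, u i = 0) →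
      (∃ T : Finset (Fin m), T.card ≤ s ∧ ∀ i ∉ T, v i = 0) →
      |u ⬝ᵥ Δ.mulVec v| ≤ δ)
    (u v : Fin m → ℝ)
    (hu : ∃ T : Finset (Fin m), T.card ≤ s ∧ ∀ i ∉ T, u i = 0)
    (hv : ∃ T : Finset (Fin m), T.card ≤ s ∧ ∀ i ∉ T, v i = 0) :
    |u ⬝ᵥ Δ.mulVec v| ≤ δ * (Real.sqrt (∑ i, u i ^ 2) * Real.sqrt (∑ i, v i ^ 2)) := by
  rcases eq_or_ne u 0 with rfl | hu0
  · simp only [zero_dotProduct, abs_zero]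
    positivity
  rcases eq_or_ne v 0 with rfl | hv0
  · simp only [Matrix.mulVec_zero, dotProduct_zero, abs_zero]
    positivity
  have hupos : 0 < ∑ i, u i ^ 2 := by
    rcases Function.ne_iff.mp hu0 with ⟨i, hi⟩
    have h1 : 0 < |u i| := abs_pos.mpr hi
    have h2 : 0 < u i ^ 2 := by rw [← sq_abs]; positivity
    exact lt_of_lt_of_le h2 (Finset.single_le_sum (fun j _ => sq_nonneg (u j)) (mem_univ i))
  have hvpos : 0 < ∑ i, v i ^ 2 := by
    rcases Function.ne_iff.mp hv0 with ⟨i, hi⟩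
    have h1 : 0 < |v i| := abs_pos.mpr hi
    have h2 : 0 < v i ^ 2 := by rw [← sq_abs]; positivity
    exact lt_of_lt_of_le h2 (Finset.single_le_sum (fun j _ => sq_nonneg (v j)) (mem_univ i))
  set a := Real.sqrt (∑ i, u i ^ 2) with ha
  set b := Real.sqrt (∑ i, v i ^ 2) with hb
  have hapos : 0 < a := Real.sqrt_pos.mpr hupos
  have hbpos : 0 < b := Real.sqrt_pos.mpr hvpos
  have ha2 : a ^ 2 = ∑ i, u i ^ 2 := Real.sq_sqrt hupos.le
  have hb2 : b ^ 2 = ∑ i, v i ^ 2 := Real.sq_sqrt hvpos.le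
  set u' : Fin m → ℝ := a⁻¹ • u with hu'
  set v' : Fin m → ℝ := b⁻¹ • v with hv'
  have hu'1 : (∑ i, u' i ^ 2) = 1 := by
    simp only [hu', Pi.smul_apply, smul_eq_mul, mul_pow, ← Finset.mul_sum, ← ha2]
    field_simp
  have hv'1 : (∑ i, v' i ^ 2) = 1 := by
    simp only [hv', Pi.smul_apply, smul_eq_mul, mul_pow, ← Finset.mul_sum, ← hb2]
    field_simp
  have hu's : ∃ T : Finset (Fin m), T.card ≤ s ∧ ∀ i ∉ T, u' i = 0 := by
    obtain ⟨T, hT, h0⟩ := hu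
    exact ⟨T, hT, fun i hi => by simp [hu', h0 i hi]⟩
  have hv's : ∃ T : Finset (Fin m), T.card ≤ s ∧ ∀ i ∉ T, v' i = 0 := by
    obtain ⟨T, hT, h0⟩ := hv
    exact ⟨T, hT, fun i hi => by simp [hv', h0 i hi]⟩
  have key := hΔ u' v' hu'1 hv'1 hu's hv's
  have hexp : u' ⬝ᵥ Δ.mulVec v' = a⁻¹ * b⁻¹ * (u ⬝ᵥ Δ.mulVec v) := by
    rw [hu', hv', Matrix.mulVec_smul, smul_dotProduct, dotProduct_smul]
    simp [smul_eq_mul]; ring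
  rw [hexp, abs_mul, abs_of_pos (by positivity : (0:ℝ) < a⁻¹ * b⁻¹)] at key
  calc |u ⬝ᵥ Δ.mulVec v| = a * b * (a⁻¹ * b⁻¹ * |u ⬝ᵥ Δ.mulVec v|) := by
        field_simp
    _ ≤ a * b * δ := mul_le_mul_of_nonneg_left key (by positivity)
    _ = δ * (a * b) := by ring

/-- If |uᵀΔv| ≤ δ for all s-sparse unit vectors u, v, then for every v in the
cone ‖v‖₁ ≤ √s ‖v‖₂ we have |vᵀΔv| ≤ 4δ ‖v‖₂². -/
theorem quadratic_form_bound_on_cone {m : ℕ} (s : ℕ) (hs : 0 < s)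
    (hsm : (s : ℝ) < m / 2) (δ : ℝ) (hδ : 0 < δ) (Δ : Matrix (Fin m) (Fin m) ℝ)
    (hΔ : ∀ u v : Fin m → ℝ,
      (∑ i, u i ^ 2) = 1 → (∑ i, v i ^ 2) = 1 →
      (∃ T : Finset (Fin m), T.card ≤ s ∧ ∀ i ∉ T, u i = 0) →
      (∃ T : Finset (Fin m), T.card ≤ s ∧ ∀ i ∉ T, v i = 0) →
      |u ⬝ᵥ Δ.mulVec v| ≤ δ) :
    ∀ v : Fin m → ℝ, (∑ i, |v i|) ≤ Real.sqrt s * Real.sqrt (∑ i, v i ^ 2) →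
      |v ⬝ᵥ Δ.mulVec v| ≤ 4 * δ * (∑ i, v i ^ 2) := by
  intro v hv
  have hm : 0 < m := by
    rcases Nat.eq_zero_or_pos m with h | h
    · subst h
      norm_num at hsm
      have : (0:ℝ) ≤ (s:ℝ) := Nat.cast_nonneg s
      linarith
    · exact h
  have hsqs : (0:ℝ) < Real.sqrt s := Real.sqrt_pos.mpr (by exact_mod_cast hs)
  -- div characterization
  have hdiv : ∀ n c : ℕ, n / s = c ↔ c * s ≤ n ∧ n < c * s + s := by
    intro n c
    constructor
    · intro h
      refine ⟨by rw [← h]; exact Nat.div_mul_le_self n s, ?_⟩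
      have h1 : n / s < c + 1 := by omega
      have h2 := (Nat.div_lt_iff_lt_mul hs).mp h1
      calc n < (c+1) * s := h2
        _ = c * s + s := by ring
    · rintro ⟨h1, h2⟩
      exact Nat.div_eq_of_lt_le h1 (by calc n < c * s + s := h2
        _ = (c + 1) * s := by ring)
  -- sorting permutation
  set σ : Equiv.Perm (Fin m) := Tuple.sort (fun i => -|v i|) with hσ
  have hanti : ∀ i j : Fin m, i ≤ j → |v (σ j)| ≤ |v (σ i)| := by
    intro i j hij
    have := Tuple.monotone_sort (fun i => -|v i|) hij
    simp only [Function.comp_apply] at this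
    linarith
  set w : Fin m → ℝ := fun j => v (σ j) with hw
  have hwv : ∀ i, w (σ.symm i) = v i := by intro i; simp [hw]
  -- blocks
  set B : ℕ → Finset (Fin m) := fun k => univ.filter (fun j => (j : ℕ) / s = k) with hB
  set u : ℕ → Fin m → ℝ := fun k i => if ((σ.symm i : Fin m) : ℕ) / s = k then v i else 0
    with hu
  set a : ℕ → ℝ := fun k => Real.sqrt (∑ j ∈ B k, w j ^ 2) with hadef
  have hanonneg : ∀ k, 0 ≤ a k := fun k => Real.sqrt_nonneg _
  -- decomposition of v
  have hvdec : v = ∑ k ∈ range m, u k := by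
    funext i
    rw [Finset.sum_apply]
    simp only [hu]
    rw [Finset.sum_ite_eq (range m) (((σ.symm i : Fin m) : ℕ) / s) (fun _ => v i)]
    rw [if_pos]
    exact Finset.mem_range.mpr (lt_of_le_of_lt (Nat.div_le_self _ _) (Fin.is_lt _))
  -- squared norms of blocks
  have hsq : ∀ k, (∑ i, u k i ^ 2) = ∑ j ∈ B k, w j ^ 2 := by
    intro k
    have key := Equiv.sum_comp σ.symm
      (fun j : Fin m => (if ((j : Fin m) : ℕ) / s = k then w j else 0) ^ 2)
    calc (∑ i, u k i ^ 2)
        = ∑ i : Fin m, (if ((σ.symm i : Fin m) : ℕ) / s = k then w (σ.symm i) else 0) ^ 2 := by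
          apply Finset.sum_congr rfl
          intro i _
          simp only [hu, hwv]
      _ = ∑ j : Fin m, (if ((j : Fin m) : ℕ) / s = k then w j else 0) ^ 2 := key
      _ = ∑ j ∈ B k, w j ^ 2 := by
          rw [hB, Finset.sum_filter]
          apply Finset.sum_congr rfl
          intro j _
          split <;> simp
  -- cardinality of blocks
  have hcardB : ∀ k, (B k).card ≤ s := by
    intro k
    calc (B k).card ≤ (range s).card := by
          refine Finset.card_le_card_of_injOn (fun j : Fin m => (j : ℕ) - k * s) ?_ ?_
          · intro j hj
            have h := (hdiv _ _).mp (Finset.mem_filter.mp hj).2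
            show (j : ℕ) - k * s ∈ range s
            exact Finset.mem_range.mpr (by omega)
          · intro x hx y hy hxy
            rw [Finset.mem_coe] at hx hy
            have h1 := (hdiv _ _).mp (Finset.mem_filter.mp hx).2
            have h2 := (hdiv _ _).mp (Finset.mem_filter.mp hy).2
            have hxy' : (x : ℕ) - k * s = (y : ℕ) - k * s := hxy
            have : (x : ℕ) = (y : ℕ) := by omega
            exact Fin.ext this
      _ = s := Finset.card_range s
  -- sparsity of blocks
  have hsupp : ∀ k, ∃ T : Finset (Fin m), T.card ≤ s ∧ ∀ i ∉ T, u k i = 0 := by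
    intro k
    refine ⟨univ.filter (fun i => ((σ.symm i : Fin m) : ℕ) / s = k), ?_, ?_⟩
    · calc (univ.filter (fun i => ((σ.symm i : Fin m) : ℕ) / s = k)).card
          ≤ (B k).card := by
            refine Finset.card_le_card_of_injOn (fun i : Fin m => σ.symm i) ?_ ?_
            · intro i hi
              simp only [hB, Finset.mem_filter, Finset.mem_univ, true_and]
              exact Finset.mem_coe.mpr (Finset.mem_filter.mpr ⟨Finset.mem_univ _, (Finset.mem_filter.mp hi).2⟩)
            · intro x _ y _ hxy
              exact σ.symm.injective hxy
        _ ≤ s := hcardB k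
    · intro i hi
      simp only [Finset.mem_filter, Finset.mem_univ, true_and] at hi
      simp only [hu, if_neg hi]
  -- bilinear expansion
  have hexp : v ⬝ᵥ Δ.mulVec v = ∑ j ∈ range m, ∑ k ∈ range m, u j ⬝ᵥ Δ.mulVec (u k) := by
    conv_lhs => rw [hvdec]
    rw [dot_sum_left_s7]
    exact Finset.sum_congr rfl fun j _ => dot_sum_right_s7 Δ (range m) u (u j)
  -- per-term bound
  have hterm : ∀ j k : ℕ, |u j ⬝ᵥ Δ.mulVec (u k)| ≤ δ * (a j * a k) := by
    intro j k
    have h := sparse_bilinear hδ hΔ (u j) (u k) (hsupp j) (hsupp k)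
    rw [hsq j, hsq k] at h
    exact h
  -- main absolute bound
  set S : ℝ := ∑ k ∈ range m, a k with hS
  have hSnonneg : 0 ≤ S := Finset.sum_nonneg fun k _ => hanonneg k
  have habs : |v ⬝ᵥ Δ.mulVec v| ≤ δ * (S * S) := by
    rw [hexp]
    calc |∑ j ∈ range m, ∑ k ∈ range m, u j ⬝ᵥ Δ.mulVec (u k)|
        ≤ ∑ j ∈ range m, |∑ k ∈ range m, u j ⬝ᵥ Δ.mulVec (u k)| :=
          Finset.abs_sum_le_sum_abs _ _
      _ ≤ ∑ j ∈ range m, ∑ k ∈ range m, |u j ⬝ᵥ Δ.mulVec (u k)| :=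
          Finset.sum_le_sum fun j _ => Finset.abs_sum_le_sum_abs _ _
      _ ≤ ∑ j ∈ range m, ∑ k ∈ range m, δ * (a j * a k) :=
          Finset.sum_le_sum fun j _ => Finset.sum_le_sum fun k _ => hterm j k
      _ = δ * (S * S) := by
          rw [hS, Finset.sum_mul_sum]
          simp only [Finset.mul_sum]
  -- norms
  set N : ℝ := Real.sqrt (∑ i, v i ^ 2) with hN
  have hNnonneg : 0 ≤ N := Real.sqrt_nonneg _
  have hsqw : (∑ j, w j ^ 2) = ∑ i, v i ^ 2 := Equiv.sum_comp σ (fun i => v i ^ 2)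
  have hl1w : (∑ j, |w j|) = ∑ i, |v i| := Equiv.sum_comp σ (fun i => |v i|)
  -- first block
  have ha0 : a 0 ≤ N := by
    apply Real.sqrt_le_sqrt
    rw [← hsqw]
    exact Finset.sum_le_sum_of_subset_of_nonneg (Finset.filter_subset _ _)
      (fun j _ _ => sq_nonneg (w j))
  -- tail blocks
  have hkey : ∀ k ∈ Finset.Ico 1 m, a k ≤ (∑ l ∈ B (k-1), |w l|) / Real.sqrt s := by
    intro k hk
    obtain ⟨hk1, hkm⟩ := Finset.mem_Ico.mp hk
    by_cases hBk : B k = ∅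
    · have : a k = 0 := by simp only [hadef, hBk]; simp
      rw [this]
      positivity
    · obtain ⟨j0, hj0⟩ := Finset.nonempty_iff_ne_empty.mpr hBk
      have hj0' := (hdiv _ _).mp (Finset.mem_filter.mp hj0).2
      have hj0m : (j0 : ℕ) < m := j0.is_lt
      have hksm : k * s - 1 < m := by omega
      have hksm' : k * s ≤ m := by omega
      have hks : (k-1) * s + s = k * s := by
        have h1 : (k-1) + 1 = k := by omega
        calc (k-1) * s + s = ((k-1) + 1) * s := by ring
          _ = k * s := by rw [h1]
      set jm : Fin m := ⟨k * s - 1, hksm⟩ with hjm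
      set c : ℝ := |w jm| with hc
      have hc0 : 0 ≤ c := abs_nonneg _
      have hup : ∀ j ∈ B k, |w j| ≤ c := by
        intro j hj
        have hj' := (hdiv _ _).mp (Finset.mem_filter.mp hj).2
        apply hanti jm j
        rw [Fin.le_def]
        simp only [hjm]
        omega
      have hak : a k ≤ Real.sqrt s * c := by
        have h1 : (∑ j ∈ B k, w j ^ 2) ≤ (s:ℝ) * c ^ 2 := by
          calc ∑ j ∈ B k, w j ^ 2 ≤ ∑ _j ∈ B k, c ^ 2 := by
                apply Finset.sum_le_sum
                intro j hj
                have h := hup j hj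
                calc w j ^ 2 = |w j| ^ 2 := (sq_abs _).symm
                  _ ≤ c ^ 2 := by nlinarith [abs_nonneg (w j)]
            _ = ((B k).card : ℝ) * c ^ 2 := by rw [Finset.sum_const, nsmul_eq_mul]
            _ ≤ (s:ℝ) * c ^ 2 := by
                apply mul_le_mul_of_nonneg_right _ (sq_nonneg c)
                exact_mod_cast hcardB k
        calc a k ≤ Real.sqrt ((s:ℝ) * c ^ 2) := Real.sqrt_le_sqrt h1
          _ = Real.sqrt s * c := by
              rw [Real.sqrt_mul (by positivity), Real.sqrt_sq hc0]
      have hlow : ∀ l ∈ B (k-1), c ≤ |w l| := by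
        intro l hl
        have hl' := (hdiv _ _).mp (Finset.mem_filter.mp hl).2
        apply hanti l jm
        rw [Fin.le_def]
        simp only [hjm]
        omega
      have hbnd : ∀ n ∈ Finset.Ico ((k-1)*s) (k*s), n < m := by
        intro n hn
        have := (Finset.mem_Ico.mp hn).2
        omega
      have hBeq : B (k-1) = (Finset.Ico ((k-1)*s) (k*s)).attachFin hbnd := by
        ext j
        simp only [hB, Finset.mem_filter, Finset.mem_univ, true_and,
          Finset.mem_attachFin, Finset.mem_Ico, hdiv]
        omega
      have hcard : (B (k-1)).card = s := by
        rw [hBeq, Finset.card_attachFin, Nat.card_Ico]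
        omega
      have hsc : (s:ℝ) * c ≤ ∑ l ∈ B (k-1), |w l| := by
        calc (s:ℝ) * c = ((B (k-1)).card : ℝ) * c := by rw [hcard]
          _ = ∑ _l ∈ B (k-1), c := by rw [Finset.sum_const, nsmul_eq_mul]
          _ ≤ ∑ l ∈ B (k-1), |w l| := Finset.sum_le_sum hlow
      calc a k ≤ Real.sqrt s * c := hak
        _ = ((s:ℝ) * c) / Real.sqrt s := by
            rw [eq_div_iff (ne_of_gt hsqs)]
            rw [mul_comm (Real.sqrt s) c, mul_assoc, Real.mul_self_sqrt (by positivity)]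
            ring
        _ ≤ (∑ l ∈ B (k-1), |w l|) / Real.sqrt s := by
            apply div_le_div_of_nonneg_right hsc hsqs.le
  -- sum over tail
  have htail : ∑ k ∈ Finset.Ico 1 m, a k ≤ N := by
    have hnum : ∑ k ∈ Finset.Ico 1 m, ∑ l ∈ B (k-1), |w l| ≤ ∑ j, |w j| := by
      rw [Finset.sum_Ico_eq_sum_range]
      simp only [Nat.add_sub_cancel_left]
      calc ∑ k ∈ range (m-1), ∑ l ∈ B k, |w l|
          ≤ ∑ k ∈ range m, ∑ l ∈ B k, |w l| := by
            apply Finset.sum_le_sum_of_subset_of_nonneg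
              (Finset.range_subset_range.mpr (by omega))
            intro k _ _
            exact Finset.sum_nonneg fun l _ => abs_nonneg _
        _ = ∑ j, |w j| := by
            rw [hB]
            exact Finset.sum_fiberwise_of_maps_to
              (fun j _ => Finset.mem_range.mpr
                (lt_of_le_of_lt (Nat.div_le_self _ _) j.is_lt)) _
    calc ∑ k ∈ Finset.Ico 1 m, a k
        ≤ ∑ k ∈ Finset.Ico 1 m, (∑ l ∈ B (k-1), |w l|) / Real.sqrt s :=
          Finset.sum_le_sum hkey
      _ = (∑ k ∈ Finset.Ico 1 m, ∑ l ∈ B (k-1), |w l|) / Real.sqrt s :=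
          (Finset.sum_div _ _ _).symm
      _ ≤ (∑ j, |w j|) / Real.sqrt s := div_le_div_of_nonneg_right ?_ hsqs.le
      _ ≤ N := by
          rw [div_le_iff₀ hsqs, hl1w]
          calc (∑ i, |v i|) ≤ Real.sqrt s * N := hv
            _ = N * Real.sqrt s := by ring
    exact hnum
  have hSN : S ≤ 2 * N := by
    have : S = a 0 + ∑ k ∈ Finset.Ico 1 m, a k := by
      rw [hS, Finset.range_eq_Ico, Finset.sum_eq_sum_Ico_succ_bot hm]
    rw [this]
    linarith
  -- conclude
  have hN2 : N ^ 2 = ∑ i, v i ^ 2 :=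
    Real.sq_sqrt (Finset.sum_nonneg fun i _ => sq_nonneg (v i))
  calc |v ⬝ᵥ Δ.mulVec v| ≤ δ * (S * S) := habs
    _ ≤ δ * ((2*N) * (2*N)) := by
        apply mul_le_mul_of_nonneg_left _ hδ.le
        exact mul_le_mul hSN hSN hSnonneg (by linarith)
    _ = 4 * δ * N ^ 2 := by ring
    _ = 4 * δ * (∑ i, v i ^ 2) := by rw [hN2]
end

section
/- Let $\delta > 0$, $0 < s < m/2$, and let $\Delta$ be an $m \times m$ matrix satisfying $|u^T \Delta v| \le \delta$ for all unit vectors $u, v$ each with at most $s$ nonzero coordinates. Then for all $v \in \mathbb{R}^m$, $|v^T \Delta v| \le 4\delta\,(\|v\|_2^2 + \|v\|_1^2/s)$. -/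
open Finset Matrix

lemma sum_dotProduct' {m : ℕ} (t : Finset ℕ) (f : ℕ → Fin m → ℝ) (w : Fin m → ℝ) :
    (∑ j ∈ t, f j) ⬝ᵥ w = ∑ j ∈ t, f j ⬝ᵥ w := by
  simp only [dotProduct, Finset.sum_apply, Finset.sum_mul]
  exact Finset.sum_comm

lemma dotProduct_sum' {m : ℕ} (t : Finset ℕ) (u : Fin m → ℝ) (f : ℕ → Fin m → ℝ)
    (Δ : Matrix (Fin m) (Fin m) ℝ) :
    u ⬝ᵥ Δ.mulVec (∑ j ∈ t, f j) = ∑ j ∈ t, u ⬝ᵥ Δ.mulVec (f j) := by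
  rw [Matrix.mulVec_sum, dotProduct_sum]

lemma sparse_bound {m : ℕ} (s : ℕ) (δ : ℝ) (hδ : 0 < δ) (Δ : Matrix (Fin m) (Fin m) ℝ)
    (hΔ : ∀ u v : Fin m → ℝ,
      (∑ i, u i ^ 2) = 1 → (∑ i, v i ^ 2) = 1 →
      (∃ T : Finset (Fin m), T.card ≤ s ∧ ∀ i ∉ T, u i = 0) →
      (∃ T : Finset (Fin m), T.card ≤ s ∧ ∀ i ∉ T, v i = 0) →
      |u ⬝ᵥ Δ.mulVec v| ≤ δ)
    (u w : Fin m → ℝ)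
    (hu : ∃ T : Finset (Fin m), T.card ≤ s ∧ ∀ i ∉ T, u i = 0)
    (hw : ∃ T : Finset (Fin m), T.card ≤ s ∧ ∀ i ∉ T, w i = 0) :
    |u ⬝ᵥ Δ.mulVec w| ≤ δ * (Real.sqrt (∑ i, u i ^ 2) * Real.sqrt (∑ i, w i ^ 2)) := by
  by_cases hu0 : (∑ i, u i ^ 2) = 0
  · have hz : u = 0 := funext fun i => by
      have := (Finset.sum_eq_zero_iff_of_nonneg (fun i _ => sq_nonneg (u i))).1 hu0 i (mem_univ i)
      exact pow_eq_zero_iff two_ne_zero |>.1 this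
    simp only [hz, zero_dotProduct, abs_zero]
    positivity
  by_cases hw0 : (∑ i, w i ^ 2) = 0
  · have hz : w = 0 := funext fun i => by
      have := (Finset.sum_eq_zero_iff_of_nonneg (fun i _ => sq_nonneg (w i))).1 hw0 i (mem_univ i)
      exact pow_eq_zero_iff two_ne_zero |>.1 this
    simp only [hz, Matrix.mulVec_zero, dotProduct_zero, abs_zero]
    positivity
  have hupos : (0:ℝ) < ∑ i, u i ^ 2 :=
    lt_of_le_of_ne (Finset.sum_nonneg fun i _ => sq_nonneg _) (Ne.symm hu0)
  have hwpos : (0:ℝ) < ∑ i, w i ^ 2 :=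
    lt_of_le_of_ne (Finset.sum_nonneg fun i _ => sq_nonneg _) (Ne.symm hw0)
  set a := Real.sqrt (∑ i, u i ^ 2) with ha_def
  set b := Real.sqrt (∑ i, w i ^ 2) with hb_def
  have ha : 0 < a := Real.sqrt_pos.2 hupos
  have hb : 0 < b := Real.sqrt_pos.2 hwpos
  have ha2 : a ^ 2 = ∑ i, u i ^ 2 := Real.sq_sqrt hupos.le
  have hb2 : b ^ 2 = ∑ i, w i ^ 2 := Real.sq_sqrt hwpos.le
  have hnorm1 : (∑ i, (a⁻¹ • u) i ^ 2) = 1 := by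
    simp only [Pi.smul_apply, smul_eq_mul, mul_pow, ← Finset.mul_sum]
    rw [← ha2]; field_simp
  have hnorm2 : (∑ i, (b⁻¹ • w) i ^ 2) = 1 := by
    simp only [Pi.smul_apply, smul_eq_mul, mul_pow, ← Finset.mul_sum]
    rw [← hb2]; field_simp
  obtain ⟨T, hT, hTu⟩ := hu
  obtain ⟨S, hS, hSw⟩ := hw
  have key := hΔ (a⁻¹ • u) (b⁻¹ • w) hnorm1 hnorm2
    ⟨T, hT, fun i hi => by simp [hTu i hi]⟩ ⟨S, hS, fun i hi => by simp [hSw i hi]⟩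
  rw [smul_dotProduct, Matrix.mulVec_smul, dotProduct_smul,
    smul_eq_mul, smul_eq_mul, ← mul_assoc, abs_mul, abs_mul] at key
  rw [abs_inv, abs_inv, abs_of_pos ha, abs_of_pos hb] at key
  have heq : |u ⬝ᵥ Δ.mulVec w| = (a * b) * (a⁻¹ * b⁻¹ * |u ⬝ᵥ Δ.mulVec w|) := by
    field_simp
  calc |u ⬝ᵥ Δ.mulVec w| = (a * b) * (a⁻¹ * b⁻¹ * |u ⬝ᵥ Δ.mulVec w|) := heq
    _ ≤ (a * b) * δ := by
        exact mul_le_mul_of_nonneg_left key (by positivity)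
    _ = δ * (a * b) := by ring

/-- If |uᵀΔv| ≤ δ for all s-sparse unit vectors u, v, then for every v ∈ ℝᵐ,
|vᵀΔv| ≤ 4δ (‖v‖₂² + ‖v‖₁²/s). -/
theorem quadratic_form_bound_all_vectors {m : ℕ} (s : ℕ) (hs : 0 < s)
    (hsm : (s : ℝ) < m / 2) (δ : ℝ) (hδ : 0 < δ) (Δ : Matrix (Fin m) (Fin m) ℝ)
    (hΔ : ∀ u v : Fin m → ℝ,
      (∑ i, u i ^ 2) = 1 → (∑ i, v i ^ 2) = 1 →
      (∃ T : Finset (Fin m), T.card ≤ s ∧ ∀ i ∉ T, u i = 0) →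
      (∃ T : Finset (Fin m), T.card ≤ s ∧ ∀ i ∉ T, v i = 0) →
      |u ⬝ᵥ Δ.mulVec v| ≤ δ) :
    ∀ v : Fin m → ℝ,
      |v ⬝ᵥ Δ.mulVec v| ≤ 4 * δ * ((∑ i, v i ^ 2) + (∑ i, |v i|) ^ 2 / s) := by
  intro v
  classical
  set σ : Equiv.Perm (Fin m) := Tuple.sort (fun i => -|v i|) with hσ
  have hg : ∀ i j : Fin m, i ≤ j → |v (σ j)| ≤ |v (σ i)| := by
    intro i j hij
    have := Tuple.monotone_sort (fun i : Fin m => -|v i|) hij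
    simp only [Function.comp_apply] at this
    rw [← hσ] at this
    linarith
  set K := m / s + 1 with hK
  set c : Fin m → ℕ := fun i => (σ.symm i : ℕ) / s with hc
  have hcK : ∀ i, c i < K := by
    intro i
    have : ((σ.symm i : ℕ)) / s ≤ m / s := Nat.div_le_div_right (σ.symm i).is_lt.le
    simp only [hc, hK]
    omega
  set vb : ℕ → Fin m → ℝ := fun j i => if c i = j then v i else 0 with hvb
  set Sf : ℕ → Finset (Fin m) := fun j => univ.filter (fun i => c i = j) with hSf
  set Tr : ℕ → Finset (Fin m) := fun j => univ.filter (fun t => (t : ℕ) / s = j) with hTr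
  have hSfTr : ∀ j, Sf j = (Tr j).image σ := by
    intro j
    ext i
    simp only [hSf, hTr, Finset.mem_filter, Finset.mem_image, Finset.mem_univ, true_and, hc]
    constructor
    · intro h; exact ⟨σ.symm i, h, Equiv.apply_symm_apply _ _⟩
    · rintro ⟨t, ht, rfl⟩; rwa [Equiv.symm_apply_apply]
  have hTrsub : ∀ j, ∀ t : Fin m, t ∈ Tr j → j * s ≤ (t : ℕ) ∧ (t : ℕ) < j * s + s := by
    intro j t ht
    simp only [hTr, Finset.mem_filter, Finset.mem_univ, true_and] at ht
    have h1 := Nat.div_add_mod (t : ℕ) s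
    have h2 := Nat.mod_lt (t : ℕ) hs
    rw [ht] at h1
    rw [Nat.mul_comm s j] at h1
    constructor
    · calc j * s ≤ j * s + (t : ℕ) % s := Nat.le_add_right _ _
        _ = (t : ℕ) := h1
    · calc (t : ℕ) = j * s + (t : ℕ) % s := h1.symm
        _ < j * s + s := Nat.add_lt_add_left h2 _
  have hTrcard_le : ∀ j, (Tr j).card ≤ s := by
    intro j
    have : (Tr j).card ≤ (Finset.Ico (j * s) (j * s + s)).card := by
      refine Finset.card_le_card_of_injOn Fin.val ?_ ?_
      · intro t ht
        have := hTrsub j t ht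
        simp [Finset.mem_Ico, this.1, this.2]
      · intro x _ y _ h; exact Fin.val_injective h
    simpa using this
  have hcard : ∀ j, (Sf j).card ≤ s := by
    intro j
    rw [hSfTr j, Finset.card_image_of_injective _ σ.injective]
    exact hTrcard_le j
  have hsupp : ∀ j, ∀ i ∉ Sf j, vb j i = 0 := by
    intro j i hi
    simp only [hSf, Finset.mem_filter, Finset.mem_univ, true_and] at hi
    simp [hvb, hi]
  have hdecomp : v = ∑ j ∈ range K, vb j := by
    funext i
    rw [Finset.sum_apply]
    simp only [hvb]
    rw [Finset.sum_ite_eq]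
    simp [hcK i]
  set a : ℕ → ℝ := fun j => Real.sqrt (∑ i, vb j i ^ 2) with ha
  set L : ℕ → ℝ := fun j => ∑ i ∈ Sf j, |v i| with hL
  have hL0 : ∀ j, 0 ≤ L j := fun j => Finset.sum_nonneg fun i _ => abs_nonneg _
  have hvbsum : ∀ j, (∑ i, vb j i ^ 2) = ∑ i ∈ Sf j, v i ^ 2 := by
    intro j
    rw [← Finset.sum_filter_of_ne (p := fun i => c i = j)]
    · apply Finset.sum_congr rfl
      intro i hi
      simp only [Finset.mem_filter] at hi
      simp [hvb, hi.2]
    · intro i _ hne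
      by_contra hci
      simp [hvb, hci] at hne
  have ha0 : a 0 ≤ Real.sqrt (∑ i, v i ^ 2) := by
    apply Real.sqrt_le_sqrt
    rw [hvbsum 0]
    exact Finset.sum_le_sum_of_subset_of_nonneg (Finset.subset_univ _) fun i _ _ => sq_nonneg _
  have hblock : ∀ j : ℕ, (∑ i, vb (j + 1) i ^ 2) ≤ (L j) ^ 2 / s := by
    intro j
    by_cases hne : (Sf (j + 1)).Nonempty
    · obtain ⟨i₀, hi₀⟩ := hne
      simp only [hSf, Finset.mem_filter, Finset.mem_univ, true_and] at hi₀
      simp only [hc] at hi₀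
      have hv0 : (j + 1) * s ≤ (σ.symm i₀ : ℕ) := by
        have h := Nat.div_mul_le_self (σ.symm i₀ : ℕ) s
        rw [hi₀] at h
        exact h
      have h2js : (j + 1) * s = j * s + s := by ring
      have hmlb : j * s + s ≤ m := by
        rw [← h2js]
        exact le_of_lt (lt_of_le_of_lt hv0 (σ.symm i₀).is_lt)
      have hm0 : 0 < m :=
        lt_of_lt_of_le hs (le_trans (Nat.le_add_left s (j * s)) hmlb)
      have hTrcard : (Tr j).card = s := by
        refine le_antisymm (hTrcard_le j) ?_
        have : (Finset.Ico (j * s) (j * s + s)).card ≤ (Tr j).card := by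
          refine Finset.card_le_card_of_injOn
            (fun n => (⟨n % m, Nat.mod_lt n hm0⟩ : Fin m)) ?_ ?_
          · intro n hn
            simp only [Finset.coe_Ico, Set.mem_Ico, Finset.mem_coe, Finset.mem_Ico] at hn
            have hnm : n < m := lt_of_lt_of_le hn.2 hmlb
            simp only [hTr, Finset.mem_coe, Finset.mem_filter, Finset.mem_univ, true_and]
            rw [Nat.mod_eq_of_lt hnm]
            refine Nat.div_eq_of_lt_le hn.1 ?_
            rw [h2js]
            exact hn.2
          · intro x hx y hy h
            simp only [Finset.mem_coe, Finset.mem_Ico] at hx hy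
            have hxy : x % m = y % m := congrArg Fin.val h
            rwa [Nat.mod_eq_of_lt (lt_of_lt_of_le hx.2 hmlb),
              Nat.mod_eq_of_lt (lt_of_lt_of_le hy.2 hmlb)] at hxy
        simpa using this
      have hkey : ∀ i ∈ Sf (j + 1), |v i| * s ≤ L j := by
        intro i hi
        simp only [hSf, Finset.mem_filter, Finset.mem_univ, true_and, hc] at hi
        have hstep : ∀ t ∈ Tr j, |v i| ≤ |v (σ t)| := by
          intro t ht
          have h1 := (hTrsub j t ht).2
          have h2 : (j + 1) * s ≤ (σ.symm i : ℕ) := by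
            have h := Nat.div_mul_le_self (σ.symm i : ℕ) s
            rw [hi] at h
            exact h
          have hle : t ≤ σ.symm i := by
            rw [Fin.le_def]
            exact le_trans (le_of_lt (h2js ▸ h1 : (t : ℕ) < (j + 1) * s)) h2
          have := hg t (σ.symm i) hle
          rwa [Equiv.apply_symm_apply] at this
        calc |v i| * s = ∑ _t ∈ Tr j, |v i| := by
              rw [Finset.sum_const, hTrcard, nsmul_eq_mul, mul_comm]
          _ ≤ ∑ t ∈ Tr j, |v (σ t)| := Finset.sum_le_sum hstep
          _ = L j := by
              simp only [hL, hSfTr j]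
              exact (Finset.sum_image (f := fun i => |v i|) (g := fun t => σ t)
                (fun x _ y _ h => σ.injective h)).symm
      have hspos : (0:ℝ) < s := by exact_mod_cast hs
      calc (∑ i, vb (j + 1) i ^ 2) = ∑ i ∈ Sf (j + 1), v i ^ 2 := hvbsum _
        _ ≤ ∑ _i ∈ Sf (j + 1), (L j / s) ^ 2 := by
            apply Finset.sum_le_sum
            intro i hi
            have h1 := hkey i hi
            have h2 : |v i| ≤ L j / s := by
              rw [le_div_iff₀ hspos]; exact h1
            calc v i ^ 2 = |v i| ^ 2 := (sq_abs _).symm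
              _ ≤ (L j / s) ^ 2 := by
                  apply pow_le_pow_left₀ (abs_nonneg _) h2
        _ = (Sf (j + 1)).card * (L j / s) ^ 2 := by rw [Finset.sum_const, nsmul_eq_mul]
        _ ≤ s * (L j / s) ^ 2 := by
            apply mul_le_mul_of_nonneg_right _ (sq_nonneg _)
            exact_mod_cast hcard (j + 1)
        _ = (L j) ^ 2 / s := by field_simp
    · have : ∀ i, vb (j + 1) i = 0 := by
        intro i
        apply hsupp
        simp [Finset.not_nonempty_iff_eq_empty.1 hne]
      have hz : (∑ i, vb (j + 1) i ^ 2) = 0 := by simp [this]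
      rw [hz]
      positivity
  have hspos : (0:ℝ) < s := by exact_mod_cast hs
  have haj : ∀ j : ℕ, a (j + 1) ≤ L j / Real.sqrt s := by
    intro j
    have h1 : a (j + 1) ≤ Real.sqrt ((L j) ^ 2 / s) := Real.sqrt_le_sqrt (hblock j)
    rwa [Real.sqrt_div (sq_nonneg _), Real.sqrt_sq (hL0 j)] at h1
  have hLsum : ∑ j ∈ range K, L j = ∑ i, |v i| := by
    simp only [hL, hSf, Finset.sum_filter]
    rw [Finset.sum_comm]
    apply Finset.sum_congr rfl
    intro i _
    rw [Finset.sum_ite_eq]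
    simp [hcK i]
  have hA : ∑ j ∈ range K, a j ≤ Real.sqrt (∑ i, v i ^ 2) + (∑ i, |v i|) / Real.sqrt s := by
    rw [hK, Finset.sum_range_succ']
    have h1 : ∑ i ∈ range (m / s), a (i + 1) ≤ (∑ i, |v i|) / Real.sqrt s := by
      calc ∑ i ∈ range (m / s), a (i + 1) ≤ ∑ i ∈ range (m / s), L i / Real.sqrt s :=
            Finset.sum_le_sum fun i _ => haj i
        _ = (∑ i ∈ range (m / s), L i) / Real.sqrt s := by rw [Finset.sum_div]
        _ ≤ (∑ i ∈ range K, L i) / Real.sqrt s := by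
            apply div_le_div_of_nonneg_right _ (Real.sqrt_pos.2 hspos).le
            apply Finset.sum_le_sum_of_subset_of_nonneg
            · rw [hK]
              exact Finset.range_subset_range.2 (Nat.le_succ _)
            · intro j _ _; exact hL0 j
        _ = (∑ i, |v i|) / Real.sqrt s := by rw [hLsum]
    linarith [ha0, h1]
  have hQ : v ⬝ᵥ Δ.mulVec v = ∑ j ∈ range K, ∑ k ∈ range K, vb j ⬝ᵥ Δ.mulVec (vb k) := by
    conv_lhs => rw [hdecomp]
    rw [sum_dotProduct']
    exact Finset.sum_congr rfl fun j _ => dotProduct_sum' _ _ _ _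
  have hbound : |v ⬝ᵥ Δ.mulVec v| ≤ δ * (∑ j ∈ range K, a j) ^ 2 := by
    rw [hQ]
    calc |∑ j ∈ range K, ∑ k ∈ range K, vb j ⬝ᵥ Δ.mulVec (vb k)|
        ≤ ∑ j ∈ range K, |∑ k ∈ range K, vb j ⬝ᵥ Δ.mulVec (vb k)| :=
          Finset.abs_sum_le_sum_abs _ _
      _ ≤ ∑ j ∈ range K, ∑ k ∈ range K, |vb j ⬝ᵥ Δ.mulVec (vb k)| :=
          Finset.sum_le_sum fun j _ => Finset.abs_sum_le_sum_abs _ _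
      _ ≤ ∑ j ∈ range K, ∑ k ∈ range K, δ * (a j * a k) :=
          Finset.sum_le_sum fun j _ => Finset.sum_le_sum fun k _ =>
            sparse_bound s δ hδ Δ hΔ (vb j) (vb k)
              ⟨Sf j, hcard j, hsupp j⟩ ⟨Sf k, hcard k, hsupp k⟩
      _ = δ * (∑ j ∈ range K, a j) ^ 2 := by
          rw [sq, Finset.sum_mul_sum]
          rw [Finset.mul_sum]
          exact Finset.sum_congr rfl fun j _ => by rw [Finset.mul_sum]
  set A := ∑ j ∈ range K, a j with hAdef
  have hApos : 0 ≤ A := Finset.sum_nonneg fun j _ => Real.sqrt_nonneg _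
  set N2 := Real.sqrt (∑ i, v i ^ 2) with hN2
  set N1 := ∑ i, |v i| with hN1
  have hN2sq : N2 ^ 2 = ∑ i, v i ^ 2 := Real.sq_sqrt (Finset.sum_nonneg fun i _ => sq_nonneg _)
  have hN1nn : 0 ≤ N1 := Finset.sum_nonneg fun i _ => abs_nonneg _
  have hN2nn : 0 ≤ N2 := Real.sqrt_nonneg _
  have hsq : A ^ 2 ≤ (N2 + N1 / Real.sqrt s) ^ 2 := pow_le_pow_left₀ hApos hA 2
  have hss : (Real.sqrt s) ^ 2 = s := Real.sq_sqrt hspos.le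
  have hexp : (N2 + N1 / Real.sqrt s) ^ 2 ≤ 2 * ((∑ i, v i ^ 2) + N1 ^ 2 / s) := by
    have h1 : (N1 / Real.sqrt s) ^ 2 = N1 ^ 2 / s := by
      rw [div_pow, hss]
    nlinarith [sq_nonneg (N2 - N1 / Real.sqrt s), hN2sq]
  have hfin : 0 ≤ (∑ i, v i ^ 2) + N1 ^ 2 / s := by positivity
  calc |v ⬝ᵥ Δ.mulVec v| ≤ δ * A ^ 2 := hbound
    _ ≤ δ * (2 * ((∑ i, v i ^ 2) + N1 ^ 2 / s)) := by
        apply mul_le_mul_of_nonneg_left _ hδ.le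
        exact le_trans hsq hexp
    _ ≤ 4 * δ * ((∑ i, v i ^ 2) + N1 ^ 2 / s) := by nlinarith
end

section
/- (Deterministic error bound for the corrected Lasso.) Let $\hat\Gamma$ be a symmetric $m \times m$ matrix satisfying the Lower-RE condition with curvature $\alpha > 0$ and tolerance $\tau > 0$: $\theta^T \hat\Gamma \theta \ge \alpha\|\theta\|_2^2 - \tau\|\theta\|_1^2$ for all $\theta$. Let $\hat\gamma \in \mathbb{R}^m$, $b_0 > 0$, $d \ge 1$, and $\lambda > 0$ satisfy $\sqrt{d}\,\tau \le \min\{\alpha/(32\sqrt{d}),\ \lambda/(4 b_0)\}$. Let $\beta^*$ be any $d$-sparse vector with $\|\beta^*\|_2 \le b_0$ and $\|\hat\gamma - \hat\Gamma\beta^*\|_\infty \le \lambda/2$, and let $\hat\beta$ minimize $\frac{1}{2}\beta^T\hat\Gamma\beta - \langle\hat\gamma,\beta\rangle + \lambda\|\beta\|_1$ over $\{\beta : \|\beta\|_1 \le b_0\sqrt{d}\}$. Then $\|\hat\beta - \beta^*\|_2 \le \frac{20}{\alpha}\lambda\sqrt{d}$ and $\|\hat\beta - \beta^*\|_1 \le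 \frac{80}{\alpha}\lambda d$. -/
open Finset Matrix

lemma cs_l1 {m : ℕ} (S : Finset (Fin m)) (f : Fin m → ℝ) :
    (∑ i ∈ S, |f i|) ≤ Real.sqrt S.card * Real.sqrt (∑ i ∈ S, f i ^ 2) := by
  have h := Finset.sum_mul_sq_le_sq_mul_sq S (fun _ => (1:ℝ)) (fun i => |f i|)
  simp only [one_pow, one_mul, sq_abs, Finset.sum_const, nsmul_eq_mul, mul_one] at h
  have h0 : 0 ≤ ∑ i ∈ S, |f i| := Finset.sum_nonneg fun i _ => abs_nonneg _
  rw [← Real.sqrt_mul (Nat.cast_nonneg _)]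
  calc (∑ i ∈ S, |f i|) = Real.sqrt ((∑ i ∈ S, |f i|) ^ 2) := by
        rw [Real.sqrt_sq h0]
    _ ≤ _ := Real.sqrt_le_sqrt h

set_option maxHeartbeats 800000 in
/-- Deterministic error bound for the corrected Lasso: under the Lower-RE
condition, the sparsity/tolerance condition √d τ ≤ min{α/(32√d), λ/(4b₀)},
and ‖γ̂ - Γ̂β*‖_∞ ≤ λ/2, the constrained ℓ₁-penalized minimizer β̂ satisfies
‖β̂ - β*‖₂ ≤ (20/α) λ √d and ‖β̂ - β*‖₁ ≤ (80/α) λ d. -/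
theorem corrected_lasso_error_bound {m : ℕ} (Ghat : Matrix (Fin m) (Fin m) ℝ)
    (hGhat : Ghat.IsSymm) (γhat : Fin m → ℝ)
    (α τ lam b₀ : ℝ) (hα : 0 < α) (hτ : 0 < τ) (hlam : 0 < lam) (hb₀ : 0 < b₀)
    (d : ℕ) (hd : 1 ≤ d)
    (hLRE : ∀ θ : Fin m → ℝ,
      θ ⬝ᵥ Ghat.mulVec θ ≥ α * (∑ i, θ i ^ 2) - τ * (∑ i, |θ i|) ^ 2)
    (hτd : Real.sqrt d * τ ≤ min (α / (32 * Real.sqrt d)) (lam / (4 * b₀)))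
    (βstar : Fin m → ℝ)
    (hsparse : ∃ S : Finset (Fin m), S.card ≤ d ∧ ∀ i ∉ S, βstar i = 0)
    (hβstar2 : Real.sqrt (∑ i, (βstar i) ^ 2) ≤ b₀)
    (horacle : ∀ i, |γhat i - Ghat.mulVec βstar i| ≤ lam / 2)
    (βhat : Fin m → ℝ) (hβhatfeas : (∑ i, |βhat i|) ≤ b₀ * Real.sqrt d)
    (hβhatopt : ∀ β : Fin m → ℝ, (∑ i, |β i|) ≤ b₀ * Real.sqrt d →
      (1 / 2) * (βhat ⬝ᵥ Ghat.mulVec βhat) - γhat ⬝ᵥ βhat + lam * (∑ i, |βhat i|) ≤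
      (1 / 2) * (β ⬝ᵥ Ghat.mulVec β) - γhat ⬝ᵥ β + lam * (∑ i, |β i|)) :
    Real.sqrt (∑ i, (βhat i - βstar i) ^ 2) ≤ 20 / α * lam * Real.sqrt d ∧
    (∑ i, |βhat i - βstar i|) ≤ 80 / α * lam * d := by
  obtain ⟨S, hScard, hS0⟩ := hsparse
  set ν : Fin m → ℝ := fun i => βhat i - βstar i with hνdef
  have hd0 : (0:ℝ) ≤ d := Nat.cast_nonneg d
  have hsd0 : 0 ≤ Real.sqrt d := Real.sqrt_nonneg d
  have hsd : Real.sqrt d * Real.sqrt d = d := Real.mul_self_sqrt hd0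
  -- β* is feasible
  have hβstar1 : (∑ i, |βstar i|) ≤ b₀ * Real.sqrt d := by
    have heq : (∑ i, |βstar i|) = ∑ i ∈ S, |βstar i| := by
      rw [← Finset.sum_subset (Finset.subset_univ S)]
      intro i _ hi
      rw [hS0 i hi, abs_zero]
    have hle : (∑ i ∈ S, |βstar i|) ≤ Real.sqrt S.card * Real.sqrt (∑ i ∈ S, βstar i ^ 2) :=
      cs_l1 S βstar
    have h1 : Real.sqrt (S.card : ℝ) ≤ Real.sqrt d :=
      Real.sqrt_le_sqrt (by exact_mod_cast hScard)
    have h2 : Real.sqrt (∑ i ∈ S, βstar i ^ 2) ≤ b₀ := by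
      refine le_trans (Real.sqrt_le_sqrt ?_) hβstar2
      exact Finset.sum_le_sum_of_subset_of_nonneg (Finset.subset_univ S)
        (fun i _ _ => sq_nonneg _)
    calc (∑ i, |βstar i|) = ∑ i ∈ S, |βstar i| := heq
      _ ≤ Real.sqrt S.card * Real.sqrt (∑ i ∈ S, βstar i ^ 2) := hle
      _ ≤ Real.sqrt d * b₀ := by
          apply mul_le_mul h1 h2 (Real.sqrt_nonneg _) hsd0
      _ = b₀ * Real.sqrt d := mul_comm _ _
  -- l1 pieces
  set a := ∑ i ∈ S, |ν i| with hadef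
  set b := ∑ i ∈ Sᶜ, |ν i| with hbdef
  have ha0 : 0 ≤ a := Finset.sum_nonneg fun i _ => abs_nonneg _
  have hb0 : 0 ≤ b := Finset.sum_nonneg fun i _ => abs_nonneg _
  have hab : a + b = ∑ i, |ν i| := Finset.sum_add_sum_compl S _
  -- L2 norm
  set N2 := Real.sqrt (∑ i, ν i ^ 2) with hN2def
  have hN2nn : 0 ≤ N2 := Real.sqrt_nonneg _
  have hN2sq : N2 ^ 2 = ∑ i, ν i ^ 2 := Real.sq_sqrt (by positivity)
  -- Cauchy–Schwarz on S
  have hCS : a ≤ Real.sqrt d * N2 := by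
    calc a ≤ Real.sqrt S.card * Real.sqrt (∑ i ∈ S, ν i ^ 2) := cs_l1 S ν
      _ ≤ Real.sqrt d * N2 := by
          apply mul_le_mul (Real.sqrt_le_sqrt (by exact_mod_cast hScard))
            (Real.sqrt_le_sqrt (Finset.sum_le_sum_of_subset_of_nonneg
              (Finset.subset_univ S) (fun i _ _ => sq_nonneg _)))
            (Real.sqrt_nonneg _) hsd0
  -- symmetry of quadratic form
  have hsymm : ∀ x y : Fin m → ℝ, x ⬝ᵥ Ghat.mulVec y = y ⬝ᵥ Ghat.mulVec x := by
    intro x y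
    simp only [dotProduct, Matrix.mulVec, Finset.mul_sum]
    rw [Finset.sum_comm]
    refine Finset.sum_congr rfl fun i _ => Finset.sum_congr rfl fun j _ => ?_
    rw [hGhat.apply j i]
    ring
  -- expansion
  have hβhat_eq : βhat = ν + βstar := by
    funext i; simp [hνdef]
  have hexp : βhat ⬝ᵥ Ghat.mulVec βhat
      = ν ⬝ᵥ Ghat.mulVec ν + 2 * (ν ⬝ᵥ Ghat.mulVec βstar) + βstar ⬝ᵥ Ghat.mulVec βstar := by
    rw [hβhat_eq, Matrix.mulVec_add, dotProduct_add, add_dotProduct,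
      add_dotProduct, hsymm βstar ν]
    ring
  have hγexp : γhat ⬝ᵥ βhat = γhat ⬝ᵥ ν + γhat ⬝ᵥ βstar := by
    rw [hβhat_eq, dotProduct_add]
  -- basic optimality inequality
  have hopt := hβhatopt βstar hβstar1
  have hbasic : (1/2) * (ν ⬝ᵥ Ghat.mulVec ν)
      ≤ (γhat ⬝ᵥ ν - ν ⬝ᵥ Ghat.mulVec βstar) + lam * ((∑ i, |βstar i|) - ∑ i, |βhat i|) := by
    rw [hexp, hγexp] at hopt
    linarith
  -- bound the cross term
  have hcross : γhat ⬝ᵥ ν - ν ⬝ᵥ Ghat.mulVec βstar ≤ (lam/2) * (a + b) := by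
    have heq : γhat ⬝ᵥ ν - ν ⬝ᵥ Ghat.mulVec βstar
        = ∑ i, ν i * (γhat i - Ghat.mulVec βstar i) := by
      simp only [dotProduct, mul_sub, Finset.sum_sub_distrib]
      congr 1
      exact Finset.sum_congr rfl fun i _ => mul_comm _ _
    rw [heq, hab, Finset.mul_sum]
    refine Finset.sum_le_sum fun i _ => ?_
    calc ν i * (γhat i - Ghat.mulVec βstar i)
        ≤ |ν i| * |γhat i - Ghat.mulVec βstar i| := by
          rw [← abs_mul]; exact le_abs_self _
      _ ≤ |ν i| * (lam/2) := mul_le_mul_of_nonneg_left (horacle i) (abs_nonneg _)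
      _ = lam / 2 * |ν i| := mul_comm _ _
  -- l1 decomposition bound
  have hl1 : (∑ i, |βstar i|) - (∑ i, |βhat i|) ≤ a - b := by
    have h1 : (∑ i, (|βstar i| - |βhat i|))
        = (∑ i ∈ S, (|βstar i| - |βhat i|)) + ∑ i ∈ Sᶜ, (|βstar i| - |βhat i|) :=
      (Finset.sum_add_sum_compl S _).symm
    have h2 : (∑ i ∈ S, (|βstar i| - |βhat i|)) ≤ a := by
      refine Finset.sum_le_sum fun i _ => ?_
      have := abs_sub_abs_le_abs_sub (βstar i) (βhat i)
      have : |βstar i| - |βhat i| ≤ |βstar i - βhat i| := this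
      rw [show |βstar i - βhat i| = |ν i| by rw [hνdef]; simp [abs_sub_comm]] at this
      exact this
    have h3 : (∑ i ∈ Sᶜ, (|βstar i| - |βhat i|)) = -b := by
      rw [hbdef, ← Finset.sum_neg_distrib]
      refine Finset.sum_congr rfl fun i hi => ?_
      have h0 : βstar i = 0 := hS0 i (Finset.mem_compl.mp hi)
      simp [hνdef, h0]
    have h4 : (∑ i, (|βstar i| - |βhat i|)) = (∑ i, |βstar i|) - ∑ i, |βhat i| :=
      Finset.sum_sub_distrib _ _
    linarith
  -- tolerance term bound
  have hL1tot : a + b ≤ 2 * (b₀ * Real.sqrt d) := by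
    rw [hab]
    calc (∑ i, |ν i|) ≤ ∑ i, (|βhat i| + |βstar i|) := by
          refine Finset.sum_le_sum fun i _ => ?_
          simpa [hνdef] using abs_sub (βhat i) (βstar i)
      _ = (∑ i, |βhat i|) + ∑ i, |βstar i| := Finset.sum_add_distrib
      _ ≤ 2 * (b₀ * Real.sqrt d) := by linarith
  have hτlam : Real.sqrt d * τ ≤ lam / (4 * b₀) := le_trans hτd (min_le_right _ _)
  have hτterm : τ * (a + b) ^ 2 ≤ (lam / 2) * (a + b) := by
    have h1 : τ * (a + b) ≤ lam / 2 := by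
      have h2 : τ * (a + b) ≤ τ * (2 * (b₀ * Real.sqrt d)) :=
        mul_le_mul_of_nonneg_left hL1tot hτ.le
      have h3 : τ * (2 * (b₀ * Real.sqrt d)) ≤ lam / 2 := by
        rw [le_div_iff₀ (by positivity : (0:ℝ) < 4 * b₀)] at hτlam
        linarith
      linarith
    calc τ * (a + b) ^ 2 = (τ * (a + b)) * (a + b) := by ring
      _ ≤ (lam / 2) * (a + b) :=
        mul_le_mul_of_nonneg_right h1 (by linarith)
  -- LRE
  have hlre := hLRE ν
  rw [← hab] at hlre
  -- main inequality: α N2² ≤ (7/2)λ a - (1/2)λ b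
  have hmain : α * N2 ^ 2 ≤ (7/2) * lam * a - (1/2) * lam * b := by
    rw [hN2sq]
    have h5 : (1/2) * (ν ⬝ᵥ Ghat.mulVec ν) ≤ (lam/2) * (a+b) + lam * (a - b) := by
      calc (1/2) * (ν ⬝ᵥ Ghat.mulVec ν)
          ≤ (γhat ⬝ᵥ ν - ν ⬝ᵥ Ghat.mulVec βstar)
            + lam * ((∑ i, |βstar i|) - ∑ i, |βhat i|) := hbasic
        _ ≤ (lam/2) * (a+b) + lam * (a - b) := by
            have := mul_le_mul_of_nonneg_left hl1 hlam.le
            linarith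
    linarith [h5, hlre, hτterm]
  -- key scalar bound: α N2 ≤ (7/2) λ √d
  have hN2tight : α * N2 ≤ (7/2) * lam * Real.sqrt d := by
    rcases eq_or_lt_of_le hN2nn with h | h
    · rw [← h, mul_zero]; positivity
    · have h6 : α * N2 * N2 ≤ (7/2) * lam * Real.sqrt d * N2 := by
        have h7 : (7/2) * lam * a ≤ (7/2) * lam * (Real.sqrt d * N2) :=
          mul_le_mul_of_nonneg_left hCS (by positivity)
        linarith [hmain, h7, mul_nonneg hlam.le hb0]
      exact le_of_mul_le_mul_right h6 h
  have hball : b ≤ 7 * a := by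
    refine le_of_mul_le_mul_left ?_ hlam
    have hq : (0:ℝ) ≤ α * N2 ^ 2 := by positivity
    linarith [hmain, hq]
  constructor
  · -- l2 bound
    show N2 ≤ 20 / α * lam * Real.sqrt d
    rw [div_mul_eq_mul_div, div_mul_eq_mul_div, le_div_iff₀ hα]
    linarith [hN2tight, mul_nonneg hlam.le hsd0]
  · -- l1 bound
    show (∑ i, |ν i|) ≤ 80 / α * lam * d
    rw [← hab, div_mul_eq_mul_div, div_mul_eq_mul_div, le_div_iff₀ hα]
    have hαa : α * a ≤ (7/2) * lam * (d:ℝ) := by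
      have h1 : α * a ≤ α * (Real.sqrt d * N2) := mul_le_mul_of_nonneg_left hCS hα.le
      have h2 : Real.sqrt d * (α * N2) ≤ Real.sqrt d * ((7/2) * lam * Real.sqrt d) :=
        mul_le_mul_of_nonneg_left hN2tight hsd0
      have hsdlam : lam * (Real.sqrt d * Real.sqrt d) = lam * d := by rw [hsd]
      linarith [h1, h2, hsdlam]
    have hαb : α * b ≤ α * (7 * a) := mul_le_mul_of_nonneg_left hball hα.le
    linarith [hαa, hαb, mul_nonneg hlam.le hd0]
end

section
/- (RE on sparse cone from Lower-RE.) Let $\hat\Gamma$ be a symmetric $m \times m$ matrix satisfying the Lower-RE condition with curvature $\alpha > 0$ and tolerance $\tau > 0$. Let $k_0 > 0$ and $d_0 \ge 1$ satisfy $2\tau(1+3k_0)^2 d_0 \le \alpha/2$. Then for every $x \in \mathbb{R}^m$ such that there exists $I$ with $|I| = 2d_0$ and $\|x_{I^c}\|_1 \le 3k_0\|x_I\|_1$, letting $T_0$ be the indices of the $2d_0$ largest coordinates of $x$ in absolute value, we have $x^T \hat\Gamma x \ge \frac{\alpha}{2}\|x_{T_0}\|_2^2$. -/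
open Finset Matrix

/-- Sum of |x| over any set is at most the sum over a set of equal card
containing the largest coordinates. -/
lemma sum_abs_le_of_top {m : ℕ} (x : Fin m → ℝ) (I T₀ : Finset (Fin m))
    (hcard : I.card = T₀.card)
    (htop : ∀ i ∈ T₀, ∀ j ∉ T₀, |x j| ≤ |x i|) :
    (∑ i ∈ I, |x i|) ≤ ∑ i ∈ T₀, |x i| := by
  have hsplitI : (∑ i ∈ I, |x i|) = (∑ i ∈ I ∩ T₀, |x i|) + ∑ i ∈ I \ T₀, |x i| := by
    rw [Finset.sum_inter_add_sum_sdiff]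
  have hsplitT : (∑ i ∈ T₀, |x i|) = (∑ i ∈ T₀ ∩ I, |x i|) + ∑ i ∈ T₀ \ I, |x i| := by
    rw [Finset.sum_inter_add_sum_sdiff]
  rw [hsplitI, hsplitT, Finset.inter_comm]
  refine add_le_add le_rfl ?_
  have hc : (I \ T₀).card = (T₀ \ I).card := by
    have h1 := Finset.card_inter_add_card_sdiff I T₀
    have h2 := Finset.card_inter_add_card_sdiff T₀ I
    rw [Finset.inter_comm] at h2
    omega
  obtain ⟨e⟩ : Nonempty (((I \ T₀ : Finset (Fin m)) : Type) ≃ ((T₀ \ I : Finset (Fin m)) : Type)) :=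
    ⟨Finset.equivOfCardEq hc⟩
  calc (∑ i ∈ I \ T₀, |x i|) = ∑ j : ((I \ T₀ : Finset (Fin m)) : Type), |x j| := (Finset.sum_attach _ (fun i => |x i|)).symm
    _ ≤ ∑ j : ((I \ T₀ : Finset (Fin m)) : Type), |x (e j)| := by
        apply Finset.sum_le_sum
        intro j _
        have hj := j.2
        have he := (e j).2
        simp only [Finset.mem_sdiff] at hj he
        exact htop _ he.1 _ hj.2
    _ = ∑ j : ((T₀ \ I : Finset (Fin m)) : Type), |x j| := Equiv.sum_comp e (fun j => |x j.1|)
    _ = ∑ i ∈ T₀ \ I, |x i| := Finset.sum_attach _ (fun i => |x i|)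

/-- RE on a sparse cone from the Lower-RE condition: if
2τ(1+3k₀)² d₀ ≤ α/2, then for every x in the cone W(2d₀, 3k₀), with T₀
the indices of its 2d₀ largest coordinates, xᵀΓ̂x ≥ (α/2)‖x_{T₀}‖₂². -/
theorem RE_sparse_cone_from_lowerRE {m : ℕ} (Ghat : Matrix (Fin m) (Fin m) ℝ)
    (hGhat : Ghat.IsSymm) (α τ k₀ : ℝ) (hα : 0 < α) (hτ : 0 < τ) (hk₀ : 0 < k₀)
    (d₀ : ℕ) (hd₀ : 1 ≤ d₀)
    (hLRE : ∀ θ : Fin m → ℝ,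
      θ ⬝ᵥ Ghat.mulVec θ ≥ α * (∑ i, θ i ^ 2) - τ * (∑ i, |θ i|) ^ 2)
    (hcond : 2 * τ * (1 + 3 * k₀) ^ 2 * d₀ ≤ α / 2) :
    ∀ x : Fin m → ℝ,
      (∃ I : Finset (Fin m), I.card = 2 * d₀ ∧
        (∑ i ∈ Iᶜ, |x i|) ≤ 3 * k₀ * (∑ i ∈ I, |x i|)) →
      ∀ T₀ : Finset (Fin m), T₀.card = 2 * d₀ →
        (∀ i ∈ T₀, ∀ j ∉ T₀, |x j| ≤ |x i|) →
        x ⬝ᵥ Ghat.mulVec x ≥ α / 2 * (∑ i ∈ T₀, x i ^ 2) := by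
  intro x ⟨I, hI, hcone⟩ T₀ hT₀ htop
  set s := ∑ i ∈ T₀, |x i| with hs
  set S := ∑ i ∈ T₀, x i ^ 2 with hS
  have hIT : (∑ i ∈ I, |x i|) ≤ s :=
    sum_abs_le_of_top x I T₀ (by rw [hI, hT₀]) htop
  have hs0 : 0 ≤ s := Finset.sum_nonneg fun i _ => abs_nonneg _
  have hS0 : 0 ≤ S := Finset.sum_nonneg fun i _ => sq_nonneg _
  -- ℓ1 bound
  have hl1 : (∑ i, |x i|) ≤ (1 + 3 * k₀) * s := by
    have : (∑ i, |x i|) = (∑ i ∈ I, |x i|) + ∑ i ∈ Iᶜ, |x i| :=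
      (Finset.sum_add_sum_compl I _).symm
    rw [this]
    have h2 : (∑ i ∈ Iᶜ, |x i|) ≤ 3 * k₀ * s :=
      hcone.trans (by nlinarith)
    nlinarith
  -- Cauchy-Schwarz
  have hCS : s ^ 2 ≤ (2 * d₀ : ℝ) * S := by
    have := sq_sum_le_card_mul_sum_sq (s := T₀) (f := fun i => |x i|)
    simp only [sq_abs] at this
    rw [hT₀] at this
    push_cast at this
    exact this
  -- ℓ2 bound
  have hl2 : S ≤ ∑ i, x i ^ 2 :=
    Finset.sum_le_sum_of_subset_of_nonneg (Finset.subset_univ T₀)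
      (fun i _ _ => sq_nonneg _)
  have hLRE' := hLRE x
  have hsum_sq : (∑ i, |x i|) ^ 2 ≤ ((1 + 3 * k₀) * s) ^ 2 := by
    have h0 : (0:ℝ) ≤ ∑ i, |x i| := Finset.sum_nonneg fun i _ => abs_nonneg _
    exact pow_le_pow_left₀ h0 hl1 2
  have key : τ * (∑ i, |x i|) ^ 2 ≤ α / 2 * S := by
    have h1 : τ * (∑ i, |x i|) ^ 2 ≤ τ * ((1 + 3 * k₀) ^ 2 * ((2 * d₀ : ℝ) * S)) := by
      rw [mul_pow] at hsum_sq
      have : (1 + 3 * k₀) ^ 2 * s ^ 2 ≤ (1 + 3 * k₀) ^ 2 * ((2 * d₀ : ℝ) * S) := by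
        apply mul_le_mul_of_nonneg_left hCS (by positivity)
      exact mul_le_mul_of_nonneg_left (hsum_sq.trans this) hτ.le
    have h2 : τ * ((1 + 3 * k₀) ^ 2 * ((2 * d₀ : ℝ) * S)) = (2 * τ * (1 + 3 * k₀) ^ 2 * d₀) * S := by
      ring
    rw [h2] at h1
    exact h1.trans (mul_le_mul_of_nonneg_right hcond hS0)
  have : α * (∑ i, x i ^ 2) ≥ α * S := mul_le_mul_of_nonneg_left hl2 hα.le
  linarith
end

section
/- (RSC-based $\ell_2$-error control from excess loss, deterministic core.) Let $L: \mathbb{R}^m \to \mathbb{R}$ and define $T(\beta_1, \beta_0) = L(\beta_1) - L(\beta_0) - \langle \nabla L(\beta_0), \beta_1 - \beta_0\rangle$. Suppose $T$ satisfies restricted strong convexity: $T(\beta_1,\beta_0) \ge \frac{\alpha_\ell}{2}\|\beta_1-\beta_0\|_2^2 - \tau_\ell\|\beta_1-\beta_0\|_1^2$ for all $\beta_0,\beta_1$, with $\alpha_\ell, \tau_\ell > 0$. Let $\hat\beta$ minimize $\phi(\beta) = L(\beta) + \lambda g(\beta)$ over a convex set $\Omega$ where $g$ is convex and $\lambda \ge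 0$, and let $\beta^t \in \Omega$ satisfy $\|\beta^t - \hat\beta\|_1 \le 4\sqrt{d}\,\|\beta^t - \hat\beta\|_2 + (\bar\epsilon + \epsilon)$ for some $\bar\epsilon, \epsilon \ge 0$ and integer $d \ge 1$. If $\nu_\ell := 64 d \tau_\ell < \alpha_\ell$, then $\phi(\beta^t) - \phi(\hat\beta) \ge \frac{\alpha_\ell - \nu_\ell}{2}\|\beta^t - \hat\beta\|_2^2 - 2\tau_\ell(\bar\epsilon + \epsilon)^2$. -/
open Finset

/-- RSC-based ℓ₂-error control from excess loss (deterministic core): if the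
loss L satisfies restricted strong convexity, β̂ minimizes φ = L + λ g over a
convex set Ω with g convex, and βᵗ ∈ Ω satisfies the ℓ₁ cone-type bound,
then the excess loss controls ‖βᵗ - β̂‖₂². -/
theorem rsc_excess_loss_lower_bound {m : ℕ}
    (L g : EuclideanSpace ℝ (Fin m) → ℝ)
    (gradL : EuclideanSpace ℝ (Fin m) → EuclideanSpace ℝ (Fin m))
    (hgrad : ∀ x, HasGradientAt L (gradL x) x)
    (αl τl : ℝ) (hαl : 0 < αl) (hτl : 0 < τl)
    (hRSC : ∀ β₀ β₁ : EuclideanSpace ℝ (Fin m),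
      L β₁ - L β₀ - (∑ i, gradL β₀ i * (β₁ i - β₀ i)) ≥
        αl / 2 * (∑ i, (β₁ i - β₀ i) ^ 2) - τl * (∑ i, |β₁ i - β₀ i|) ^ 2)
    (lam : ℝ) (hlam : 0 ≤ lam)
    (Ω : Set (EuclideanSpace ℝ (Fin m))) (hΩ : Convex ℝ Ω)
    (hg : ConvexOn ℝ Set.univ g)
    (βhat βt : EuclideanSpace ℝ (Fin m)) (hβhat : βhat ∈ Ω) (hβt : βt ∈ Ω)
    (hmin : ∀ β ∈ Ω, L βhat + lam * g βhat ≤ L β + lam * g β)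
    (d : ℕ) (hd : 1 ≤ d) (εbar ε : ℝ) (hεbar : 0 ≤ εbar) (hε : 0 ≤ ε)
    (hl1 : (∑ i, |βt i - βhat i|) ≤
      4 * Real.sqrt d * Real.sqrt (∑ i, (βt i - βhat i) ^ 2) + (εbar + ε))
    (hν : 64 * d * τl < αl) :
    (L βt + lam * g βt) - (L βhat + lam * g βhat) ≥
      (αl - 64 * d * τl) / 2 * (∑ i, (βt i - βhat i) ^ 2) -
        2 * τl * (εbar + ε) ^ 2 := by
  set Δ : EuclideanSpace ℝ (Fin m) := βt - βhat with hΔdef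
  set S : ℝ := ∑ i, (βt i - βhat i) ^ 2 with hSdef
  set A : ℝ := ∑ i, |βt i - βhat i| with hAdef
  set G : ℝ := ∑ i, gradL βhat i * (βt i - βhat i) with hGdef
  have hSnn : (0:ℝ) ≤ S := Finset.sum_nonneg fun i _ => sq_nonneg _
  have hAnn : (0:ℝ) ≤ A := Finset.sum_nonneg fun i _ => abs_nonneg _
  -- Step 1: first-order optimality
  have key : (0:ℝ) ≤ G + lam * (g βt - g βhat) := by
    set h : ℝ → ℝ := fun t => L (βhat + t • Δ) + lam * ((1 - t) * g βhat + t * g βt)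
      with hhdef
    have hderiv : HasDerivAt h (G + lam * (g βt - g βhat)) 0 := by
      have h1 : HasDerivAt (fun t : ℝ => βhat + t • Δ) Δ 0 := by
        have : HasDerivAt (fun t : ℝ => t • Δ) ((1:ℝ) • Δ) 0 :=
          (hasDerivAt_id (0:ℝ)).smul_const Δ
        simpa using this.const_add βhat
      have h2 := (hgrad βhat).hasFDerivAt
      have h3 : HasDerivAt (fun t : ℝ => L (βhat + t • Δ)) G 0 := by
        have h4 := HasFDerivAt.comp_hasDerivAt 0 (by simpa using h2) h1
        have : ((InnerProductSpace.toDual ℝ (EuclideanSpace ℝ (Fin m))) (gradL βhat)) Δ = G := by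
          simp [InnerProductSpace.toDual_apply_apply, PiLp.inner_apply, RCLike.inner_apply, hΔdef,
            hGdef, mul_comm]
        rw [this] at h4; exact h4
      have h5 : HasDerivAt (fun t : ℝ => lam * ((1 - t) * g βhat + t * g βt))
          (lam * (g βt - g βhat)) 0 := by
        have : HasDerivAt (fun t : ℝ => (1 - t) * g βhat + t * g βt)
            (g βt - g βhat) 0 := by
          have ha : HasDerivAt (fun t : ℝ => (1 - t) * g βhat) (-g βhat) 0 := by
            simpa using ((hasDerivAt_id (0:ℝ)).const_sub 1).mul_const (g βhat)
          have hb : HasDerivAt (fun t : ℝ => t * g βt) (g βt) 0 := by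
            simpa using (hasDerivAt_id (0:ℝ)).mul_const (g βt)
          exact (ha.add hb).congr_deriv (by ring)
        simpa using this.const_mul lam
      exact h3.add h5
    have hmono : ∀ t ∈ Set.Ioc (0:ℝ) 1, h 0 ≤ h t := by
      intro t ht
      have hmem : βhat + t • Δ ∈ Ω := by
        have := hΩ hβhat hβt (show (0:ℝ) ≤ 1 - t by linarith [ht.2]) ht.1.le (by ring)
        have heq : (1 - t) • βhat + t • βt = βhat + t • Δ := by
          simp [hΔdef, smul_sub, sub_smul]; abel
        rwa [heq] at this
      have h6 := hmin _ hmem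
      have h7 : g (βhat + t • Δ) ≤ (1 - t) * g βhat + t * g βt := by
        have := hg.2 (Set.mem_univ βhat) (Set.mem_univ βt)
          (show (0:ℝ) ≤ 1 - t by linarith [ht.2]) ht.1.le (by ring)
        have heq : (1 - t) • βhat + t • βt = βhat + t • Δ := by
          simp [hΔdef, smul_sub, sub_smul]; abel
        rw [heq] at this
        simpa [smul_eq_mul] using this
      have h8 : lam * g (βhat + t • Δ) ≤ lam * ((1 - t) * g βhat + t * g βt) :=
        mul_le_mul_of_nonneg_left h7 hlam
      simp only [hhdef]
      simp only [zero_smul, add_zero, one_mul, sub_zero, mul_zero]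
      linarith
    -- slope argument
    have hslope := (hderiv.hasDerivWithinAt (s := Set.Ioi (0:ℝ)))
    rw [hasDerivWithinAt_iff_tendsto_slope,
      Set.diff_singleton_eq_self (by simp : (0:ℝ) ∉ Set.Ioi (0:ℝ))] at hslope
    have hev : ∀ᶠ t in nhdsWithin 0 (Set.Ioi (0:ℝ)), 0 ≤ slope h 0 t := by
      filter_upwards [Ioc_mem_nhdsGT (zero_lt_one)] with t ht
      rw [slope_def_field]
      exact div_nonneg (by linarith [hmono t ht]) (by simpa using ht.1.le)
    exact ge_of_tendsto hslope hev
  -- Step 2: bound A²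
  have hA2 : A ^ 2 ≤ 32 * d * S + 2 * (εbar + ε) ^ 2 := by
    have h1 : A ^ 2 ≤ (4 * Real.sqrt d * Real.sqrt S + (εbar + ε)) ^ 2 :=
      pow_le_pow_left₀ hAnn hl1 2
    have hsd : Real.sqrt d ^ 2 = (d:ℝ) := Real.sq_sqrt (Nat.cast_nonneg d)
    have hsS : Real.sqrt S ^ 2 = S := Real.sq_sqrt hSnn
    nlinarith [sq_nonneg (4 * Real.sqrt d * Real.sqrt S - (εbar + ε))]
  have hT := hRSC βhat βt
  have h9 : τl * A ^ 2 ≤ τl * (32 * d * S + 2 * (εbar + ε) ^ 2) :=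
    mul_le_mul_of_nonneg_left hA2 hτl.le
  rw [ge_iff_le] at hT ⊢
  nlinarith [hT, key, h9]
end
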